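/- arXiv:0912.1361 — 6 statements merged into one kernel-verified Lean document; each statement's English description precedes it below -/
import Mathlib

section
/- For every n ≥ 0 and every permutation π of {1,…,n} avoiding the pattern 312, the following are equivalent: (i) π is simsun; (ii) π avoids the pattern 321; (iii) π avoids the generalized pattern 3̂2̂1 (there is no pair of indices i, j with i+1 < j and π_i > π_{i+1} > π_j). -/
/-- `π` is simsun: for every `k`, the subword of the one-line notation of `π`
consisting of the `k` smallest entries (i.e. the values `< k`, in 0-based form)
contains no three consecutive decreasing elements.  Here "three consecutive
decreasing elements of the subword" means positions `a < b < c` whose values are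
all `< k`, with no position carrying a value `< k` strictly between `a` and `b`
nor strictly between `b` and `c`, and with `π a > π b > π c`. -/
def IsSimsun {n : ℕ} (π : Equiv.Perm (Fin n)) : Prop :=
  ∀ k : ℕ, ¬ ∃ a b c : Fin n, a < b ∧ b < c ∧
    (π a : ℕ) < k ∧ (π b : ℕ) < k ∧ (π c : ℕ) < k ∧
    (∀ m : Fin n, a < m → m < b → k ≤ (π m : ℕ)) ∧
    (∀ m : Fin n, b < m → m < c → k ≤ (π m : ℕ)) ∧
    (π c : ℕ) < (π b : ℕ) ∧ (π b : ℕ) < (π a : ℕ)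

/-- `π` contains the pattern 312. -/
def Contains312 {n : ℕ} (π : Equiv.Perm (Fin n)) : Prop :=
  ∃ a b c : Fin n, a < b ∧ b < c ∧ π b < π c ∧ π c < π a

/-- `π` contains the pattern 321. -/
def Contains321 {n : ℕ} (π : Equiv.Perm (Fin n)) : Prop :=
  ∃ a b c : Fin n, a < b ∧ b < c ∧ π c < π b ∧ π b < π a

/-- `π` contains the generalized pattern 3̂2̂1 (first two entries adjacent):
there are indices `i`, `j` with `i + 1 < j` and `π i > π (i+1) > π j`. -/
def Contains32hat1 {n : ℕ} (π : Equiv.Perm (Fin n)) : Prop :=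
  ∃ (i j : ℕ) (hj : j < n) (_ : i + 1 < j),
    π ⟨j, hj⟩ < π ⟨i + 1, by omega⟩ ∧ π ⟨i + 1, by omega⟩ < π ⟨i, by omega⟩

lemma hat_of_321 {n : ℕ} (π : Equiv.Perm (Fin n)) (h312 : ¬ Contains312 π)
    (h : Contains321 π) : Contains32hat1 π := by
  obtain ⟨a, b, c, hab, hbc, h1, h2⟩ := h
  have key : ∀ d, ∀ a b c : Fin n, (b : ℕ) - a ≤ d → a < b → b < c →
      π c < π b → π b < π a → Contains32hat1 π := by
    intro d
    induction d with
    | zero =>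
      intro a b c hle hab _ _ _
      rw [Fin.lt_def] at hab; omega
    | succ d ih =>
      intro a b c hle hab hbc h1 h2
      have hab' : (a : ℕ) < b := hab
      have hbc' : (b : ℕ) < c := hbc
      have hcn : (c : ℕ) < n := c.isLt
      by_cases hb1 : (b : ℕ) = a + 1
      · refine ⟨a, c, hcn, by omega, ?_, ?_⟩
        · have e1 : (⟨(a : ℕ) + 1, by omega⟩ : Fin n) = b := by
            apply Fin.ext; simp [hb1]
          have e2 : (⟨(c : ℕ), hcn⟩ : Fin n) = c := Fin.eta c hcn
          rw [e1, e2]; exact h1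
        · have e1 : (⟨(a : ℕ) + 1, by omega⟩ : Fin n) = b := by
            apply Fin.ext; simp [hb1]
          have e2 : (⟨(a : ℕ), by omega⟩ : Fin n) = a := Fin.eta a a.isLt
          rw [e1, e2]; exact h2
      · set m : Fin n := ⟨(a : ℕ) + 1, by omega⟩ with hm
        have ham : a < m := by rw [Fin.lt_def]; simp [hm]
        have hmb : m < b := by rw [Fin.lt_def]; simp [hm]; omega
        have hmc : m < c := lt_trans hmb hbc
        have hmne_b : π m ≠ π b := fun h => (ne_of_lt hmb) (π.injective h)
        have hmne_c : π m ≠ π c := fun h => (ne_of_lt hmc) (π.injective h)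
        rcases lt_or_gt_of_ne hmne_b with hlt | hgt
        · -- π m < π b : compare with π c
          rcases lt_or_gt_of_ne hmne_c with hlt2 | hgt2
          · -- π m < π c : 312 pattern at (a, m, c)
            exact absurd ⟨a, m, c, ham, hmc, hlt2, lt_trans h1 h2⟩ h312
          · -- π c < π m < π b : direct occurrence with i = a, j = c
            refine ⟨a, c, hcn, by omega, ?_, ?_⟩
            · have e2 : (⟨(c : ℕ), hcn⟩ : Fin n) = c := Fin.eta c hcn
              rw [show (⟨(a : ℕ) + 1, by omega⟩ : Fin n) = m from rfl, e2]
              exact hgt2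
            · have e2 : (⟨(a : ℕ), by omega⟩ : Fin n) = a := Fin.eta a a.isLt
              rw [show (⟨(a : ℕ) + 1, by omega⟩ : Fin n) = m from rfl, e2]
              exact lt_trans hlt h2
        · -- π b < π m : recurse with (m, b, c)
          exact ih m b c (by simp [hm]; omega) hmb hbc h1 hgt
  exact key ((b : ℕ) - a) a b c le_rfl hab hbc h1 h2

lemma not_simsun_of_hat {n : ℕ} (π : Equiv.Perm (Fin n)) (h312 : ¬ Contains312 π)
    (h : Contains32hat1 π) : ¬ IsSimsun π := by
  classical
  obtain ⟨i, j, hj, hij, h1, h2⟩ := h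
  intro hs
  have hi1 : i + 1 < n := by omega
  have hin : i < n := by omega
  set P : ℕ → Prop := fun j' => ∃ hj' : j' < n, i + 1 < j' ∧
    π ⟨j', hj'⟩ < π ⟨i + 1, hi1⟩ with hP
  have hex : ∃ j', P j' := ⟨j, hj, hij, h1⟩
  set j0 := Nat.find hex with hj0def
  obtain ⟨hj0n, hij0, hlt0⟩ := Nat.find_spec hex
  set a : Fin n := ⟨i, hin⟩
  set b : Fin n := ⟨i + 1, hi1⟩
  set c : Fin n := ⟨j0, hj0n⟩
  have h2' : π b < π a := h2
  apply hs ((π a : ℕ) + 1)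
  refine ⟨a, b, c, ?_, ?_, by omega, ?_, ?_, ?_, ?_, ?_, ?_⟩
  · rw [Fin.lt_def]; simp [a, b]
  · rw [Fin.lt_def]; exact hij0
  · have : (π b : ℕ) < π a := h2'
    omega
  · have hcb : (π c : ℕ) < π b := hlt0
    have : (π b : ℕ) < π a := h2'
    omega
  · intro m hm1 hm2
    rw [Fin.lt_def] at hm1 hm2
    simp only [a, b] at hm1 hm2
    omega
  · intro m hm1 hm2
    rw [Fin.lt_def] at hm1 hm2
    simp only [b, c] at hm1 hm2
    by_contra hcon
    push_neg at hcon
    have hmne_a : π m ≠ π a := fun h => (by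
      have := π.injective h
      have : (m : ℕ) = i := congrArg Fin.val this
      omega)
    have hmne_b : π m ≠ π b := fun h => (by
      have := π.injective h
      have : (m : ℕ) = i + 1 := congrArg Fin.val this
      omega)
    have hma : (π m : ℕ) < π a := by
      have := Fin.val_ne_of_ne hmne_a
      omega
    rcases lt_or_gt_of_ne hmne_b with hlt | hgt
    · -- contradicts minimality of j0
      have hPm : P (m : ℕ) := ⟨m.isLt, hm1, by
        rw [Fin.eta]; exact hlt⟩
      exact Nat.find_min hex hm2 hPm
    · -- 312 at (a, b, m)
      refine h312 ⟨a, b, m, ?_, ?_, hgt, ?_⟩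
      · rw [Fin.lt_def]; simp [a, b]
      · rw [Fin.lt_def]; simp [b]; omega
      · rw [Fin.lt_def]; exact hma
  · exact hlt0
  · exact h2'

lemma hat_imp_321 {n : ℕ} (π : Equiv.Perm (Fin n)) (h : Contains32hat1 π) :
    Contains321 π := by
  obtain ⟨i, j, hj, hij, h1, h2⟩ := h
  refine ⟨⟨i, by omega⟩, ⟨i + 1, by omega⟩, ⟨j, hj⟩, ?_, ?_, h1, h2⟩
  · rw [Fin.lt_def]; simp
  · rw [Fin.lt_def]; simpa using hij

lemma simsun_of_not321 {n : ℕ} (π : Equiv.Perm (Fin n)) (h : ¬ Contains321 π) :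
    IsSimsun π := by
  intro k ⟨a, b, c, hab, hbc, _, _, _, _, _, h1, h2⟩
  exact h ⟨a, b, c, hab, hbc, h1, h2⟩

/-- For a 312-avoiding permutation `π`, the following are equivalent:
(i) `π` is simsun; (ii) `π` avoids the pattern 321; (iii) `π` avoids the
generalized pattern 3̂2̂1. -/
theorem simsun_tfae_of_avoids312 (n : ℕ) (π : Equiv.Perm (Fin n))
    (h312 : ¬ Contains312 π) :
    (IsSimsun π ↔ ¬ Contains321 π) ∧ (IsSimsun π ↔ ¬ Contains32hat1 π) := by
  have A : Contains321 π → Contains32hat1 π := hat_of_321 π h312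
  have B : Contains32hat1 π → ¬ IsSimsun π := not_simsun_of_hat π h312
  constructor
  · constructor
    · intro hs h321
      exact B (A h321) hs
    · exact simsun_of_not321 π
  · constructor
    · intro hs hhat
      exact B hhat hs
    · intro hhat
      exact simsun_of_not321 π (fun h321 => hhat (A h321))
end

section
/- For every n ≥ 4, the number of simsun permutations of {1,…,n} that avoid both patterns 123 and 132 equals 2. -/
/-- `π` contains the pattern 123. -/
def Contains123 {n : ℕ} (π : Equiv.Perm (Fin n)) : Prop :=
  ∃ a b c : Fin n, a < b ∧ b < c ∧ π a < π b ∧ π b < π c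

/-- `π` contains the pattern 132. -/
def Contains132 {n : ℕ} (π : Equiv.Perm (Fin n)) : Prop :=
  ∃ a b c : Fin n, a < b ∧ b < c ∧ π a < π c ∧ π c < π b

namespace SimsunAux

variable {n : ℕ}

/-- The involution pairing positions `(t,t+1), (t+2,t+3), …`. -/
def stFun (n t : ℕ) (i : Fin n) : Fin n :=
  if (i.val + t) % 2 = 0 then
    if h : i.val + 1 < n then ⟨i.val + 1, h⟩ else i
  else
    ⟨i.val - 1, lt_of_le_of_lt (Nat.sub_le _ _) i.isLt⟩

lemma stFun_involutive (n t : ℕ) : Function.Involutive (stFun n t) := by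
  intro i
  unfold stFun
  by_cases h0 : (i.val + t) % 2 = 0
  · rw [if_pos h0]
    by_cases h1 : i.val + 1 < n
    · rw [dif_pos h1]
      have : ((⟨i.val + 1, h1⟩ : Fin n).val + t) % 2 ≠ 0 := by simp; omega
      rw [if_neg this]
      ext; simp
    · rw [dif_neg h1, if_pos h0, dif_neg h1]
  · rw [if_neg h0]
    by_cases h2 : 1 ≤ i.val
    · have : ((⟨i.val - 1, lt_of_le_of_lt (Nat.sub_le _ _) i.isLt⟩ : Fin n).val + t) % 2 = 0 := by
        simp; omega
      rw [if_pos this]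
      have h3 : (i.val - 1) + 1 < n := by omega
      rw [dif_pos h3]
      ext; simp; omega
    · have hi0 : i.val = 0 := by omega
      have he : (⟨i.val - 1, lt_of_le_of_lt (Nat.sub_le _ _) i.isLt⟩ : Fin n) = i := by
        ext; simp; omega
      rw [he, if_neg h0, he]

/-- One of the two extremal permutations, as a permutation. -/
def pit (n t : ℕ) : Equiv.Perm (Fin n) :=
  (Function.Involutive.toPerm _ (stFun_involutive n t)).trans Fin.revPerm

lemma pit_apply (n t : ℕ) (i : Fin n) : pit n t i = Fin.rev (stFun n t i) := rfl

lemma pit_val (n t : ℕ) (i : Fin n) : (pit n t i : ℕ) = n - 1 - (stFun n t i).val := by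
  rw [pit_apply, Fin.val_rev]; omega

lemma st_le (n t : ℕ) (i : Fin n) : (stFun n t i).val ≤ i.val + 1 := by
  unfold stFun; split
  · split <;> simp <;> omega
  · simp; omega

lemma le_st (n t : ℕ) (i : Fin n) : i.val ≤ (stFun n t i).val + 1 := by
  unfold stFun; split
  · split <;> simp <;> omega
  · simp; omega

lemma st_even (n t : ℕ) (i : Fin n) (h0 : (i.val + t) % 2 = 0) (h1 : i.val + 1 < n) :
    (stFun n t i).val = i.val + 1 := by
  unfold stFun; rw [if_pos h0, dif_pos h1]

lemma st_odd (n t : ℕ) (i : Fin n) (h0 : (i.val + t) % 2 = 1) :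
    (stFun n t i).val = i.val - 1 := by
  unfold stFun
  rw [if_neg (by omega)]

lemma pit_L1 (n t : ℕ) (a b : Fin n) (h : a.val + 2 ≤ b.val) :
    (pit n t b : ℕ) < (pit n t a : ℕ) := by
  have h1 : (stFun n t a).val < (stFun n t b).val := by
    have h2 : (stFun n t a).val ≤ (stFun n t b).val := by
      have := st_le n t a; have := le_st n t b; omega
    have h3 : stFun n t a ≠ stFun n t b := by
      intro he
      have := (stFun_involutive n t).injective he
      apply absurd (congrArg Fin.val this); omega
    have h4 : (stFun n t a).val ≠ (stFun n t b).val := fun hv => h3 (Fin.ext hv)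
    omega
  have := (stFun n t b).isLt
  rw [pit_val, pit_val]; omega

lemma pit_L2 (n t : ℕ) (a b : Fin n) (h : b.val = a.val + 1) :
    ((pit n t a : ℕ) < (pit n t b : ℕ)) ↔ (a.val + t) % 2 = 0 := by
  have hb : a.val + 1 < n := h ▸ b.isLt
  by_cases h0 : (a.val + t) % 2 = 0
  · have ha' : (stFun n t a).val = a.val + 1 := st_even n t a h0 hb
    have hb' : (stFun n t b).val = b.val - 1 := st_odd n t b (by omega)
    rw [pit_val, pit_val]
    simp only [h0, iff_true]
    omega
  · have ha' : (stFun n t a).val = a.val - 1 := st_odd n t a (by omega)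
    have hble : (stFun n t b).val ≤ b.val + 1 := st_le n t b
    have hbge : b.val ≤ (stFun n t b).val + 1 := le_st n t b
    have hbne : (stFun n t b).val ≠ a.val - 1 := by
      intro he
      have : stFun n t b = stFun n t a := Fin.ext (by omega)
      have := (stFun_involutive n t).injective this
      apply absurd (congrArg Fin.val this); omega
    have h5 : (stFun n t b).val < n := (stFun n t b).isLt
    rw [pit_val, pit_val]
    simp only [h0, iff_false, not_lt]
    omega

/-- L1: every entry beats all entries at least two positions later. -/
def SL1 (π : Equiv.Perm (Fin n)) : Prop :=
  ∀ a b : Fin n, a.val + 2 ≤ b.val → (π b : ℕ) < (π a : ℕ)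

/-- L2: ascents exactly at positions of parity `t`. -/
def SL2 (π : Equiv.Perm (Fin n)) (t : ℕ) : Prop :=
  ∀ a b : Fin n, b.val = a.val + 1 → (((π a : ℕ) < (π b : ℕ)) ↔ (a.val + t) % 2 = 0)

lemma not123_of_L1 (π : Equiv.Perm (Fin n)) (h : SL1 π) : ¬ Contains123 π := by
  rintro ⟨a, b, c, hab, hbc, h1, h2⟩
  rw [Fin.lt_def] at hab hbc h1 h2
  have := h a c (by omega)
  omega

lemma not132_of_L1 (π : Equiv.Perm (Fin n)) (h : SL1 π) : ¬ Contains132 π := by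
  rintro ⟨a, b, c, hab, hbc, h1, h2⟩
  rw [Fin.lt_def] at hab hbc h1 h2
  have := h a c (by omega)
  omega

lemma simsun_of_L1_L2 (π : Equiv.Perm (Fin n)) (t : ℕ) (h1 : SL1 π) (h2 : SL2 π t) : IsSimsun π := by
  intro k
  rintro ⟨a, b, c, hab, hbc, hka, hkb, hkc, g1, g2, d1, d2⟩
  rw [Fin.lt_def] at hab hbc
  -- c = b + 1
  have hc : c.val = b.val + 1 := by
    by_contra hne
    have hm : b.val + 1 < n := lt_of_le_of_lt (by omega) c.isLt
    have e1 := g2 ⟨b.val + 1, hm⟩ (by simp [Fin.lt_def]) (by simp [Fin.lt_def]; omega)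
    have e2 := h1 a ⟨b.val + 1, hm⟩ (by simp; omega)
    omega
  -- b ≤ a + 2
  have hb : b.val ≤ a.val + 2 := by
    by_contra hne
    have hm : a.val + 2 < n := lt_of_le_of_lt (by omega) b.isLt
    have e1 := g1 ⟨a.val + 2, hm⟩ (by simp [Fin.lt_def]) (by simp [Fin.lt_def]; omega)
    have e2 := h1 a ⟨a.val + 2, hm⟩ (by simp)
    omega
  rcases Nat.lt_or_ge b.val (a.val + 2) with hb1 | hb2
  · -- b = a + 1 : two consecutive descents
    have hba : b.val = a.val + 1 := by omega
    have e1 := h2 a b hba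
    have e2 := h2 b c hc
    omega
  · -- b = a + 2
    have hba : b.val = a.val + 2 := by omega
    have hm : a.val + 1 < n := lt_of_le_of_lt (by omega) b.isLt
    have hg := g1 ⟨a.val + 1, hm⟩ (by simp [Fin.lt_def]) (by simp [Fin.lt_def]; omega)
    have e1 := h2 a ⟨a.val + 1, hm⟩ (by simp)
    have e2 := h2 b c hc
    omega

lemma pi_val_ne (π : Equiv.Perm (Fin n)) {a b : Fin n} (h : a ≠ b) :
    (π a : ℕ) ≠ (π b : ℕ) := fun hv => h (π.injective (Fin.ext hv))

/-- From avoidance: no element with two larger elements after it. -/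
lemma key3 (π : Equiv.Perm (Fin n)) (h123 : ¬ Contains123 π) (h132 : ¬ Contains132 π)
    (a b c : Fin n) (hab : a < b) (hbc : b < c)
    (h1 : (π a : ℕ) < (π b : ℕ)) (h2 : (π a : ℕ) < (π c : ℕ)) : False := by
  have hne : (π b : ℕ) ≠ (π c : ℕ) := pi_val_ne π (Fin.ne_of_lt hbc)
  rcases Nat.lt_or_ge (π b : ℕ) (π c : ℕ) with h | h
  · exact h123 ⟨a, b, c, hab, hbc, by rw [Fin.lt_def]; omega, by rw [Fin.lt_def]; omega⟩
  · exact h132 ⟨a, b, c, hab, hbc, by rw [Fin.lt_def]; omega, by rw [Fin.lt_def]; omega⟩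

/-- The crux: simsun + avoiding implies SL1, for `n ≥ 4`. -/
lemma SL1_of (π : Equiv.Perm (Fin n)) (hn : 4 ≤ n) (hs : IsSimsun π)
    (h123 : ¬ Contains123 π) (h132 : ¬ Contains132 π) : SL1 π := by
  by_contra hcon
  unfold SL1 at hcon
  push_neg at hcon
  -- the set of violating positions
  set V : Finset (Fin n) :=
    Finset.univ.filter (fun a => ∃ b : Fin n, a.val + 2 ≤ b.val ∧ (π a : ℕ) < (π b : ℕ))
    with hV
  have hVne : V.Nonempty := by
    obtain ⟨a, b, hab, hle⟩ := hcon
    refine ⟨a, ?_⟩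
    rw [hV, Finset.mem_filter]
    exact ⟨Finset.mem_univ _, b, hab,
      lt_of_le_of_ne hle (pi_val_ne π (fun h => by apply absurd (congrArg Fin.val h); omega))⟩
  set i := V.max' hVne with hi
  have hiV : i ∈ V := V.max'_mem hVne
  rw [hV, Finset.mem_filter] at hiV
  obtain ⟨-, j, hij, hπij⟩ := hiV
  have hmax : ∀ a : Fin n, (∃ b : Fin n, a.val + 2 ≤ b.val ∧ (π a : ℕ) < (π b : ℕ)) →
      a.val ≤ i.val := by
    intro a ha
    have : a ∈ V := by rw [hV, Finset.mem_filter]; exact ⟨Finset.mem_univ _, ha⟩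
    exact V.le_max' a this
  have hjn : j.val < n := j.isLt
  -- entries strictly between i and j are below π i
  have between : ∀ m : Fin n, i.val < m.val → m.val < j.val → (π m : ℕ) < (π i : ℕ) := by
    intro m h1 h2
    by_contra h
    have : (π i : ℕ) < (π m : ℕ) :=
      lt_of_le_of_ne (by omega) (pi_val_ne π (fun h => by apply absurd (congrArg Fin.val h); omega))
    exact key3 π h123 h132 i m j (by rw [Fin.lt_def]; omega) (by rw [Fin.lt_def]; omega) this hπij
  -- entries after j are below π i
  have after : ∀ m : Fin n, j.val < m.val → (π m : ℕ) < (π i : ℕ) := by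
    intro m h1
    by_contra h
    have : (π i : ℕ) < (π m : ℕ) :=
      lt_of_le_of_ne (by omega) (pi_val_ne π (fun h => by apply absurd (congrArg Fin.val h); omega))
    exact key3 π h123 h132 i j m (by rw [Fin.lt_def]; omega) (by rw [Fin.lt_def]; omega) hπij this
  rcases Nat.lt_or_ge (i.val + 3) n with hcase | hcase
  · -- i ≤ n - 4
    rcases Nat.lt_or_ge (i.val + 2) j.val with hj3 | hj3
    · -- j ≥ i + 3 : both i+1, i+2 are between
      set m1 : Fin n := ⟨i.val + 1, by omega⟩ with hm1
      set m2 : Fin n := ⟨i.val + 2, by omega⟩ with hm2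
      have hb1 : (π m1 : ℕ) < (π i : ℕ) := between m1 (by simp [hm1]) (by simp [hm1]; omega)
      have hb2 : (π m2 : ℕ) < (π i : ℕ) := between m2 (by simp [hm2]) (by simp [hm2]; omega)
      have hne12 : (π m1 : ℕ) ≠ (π m2 : ℕ) := by
        apply pi_val_ne; intro h; apply absurd (congrArg Fin.val h); simp [hm1, hm2]
      rcases Nat.lt_or_ge (π m2 : ℕ) (π m1 : ℕ) with hlt | hge
      · exact hs ((π i : ℕ) + 1) ⟨i, m1, m2, by simp [Fin.lt_def, hm1],
          by simp [Fin.lt_def, hm1, hm2], by omega, by omega, by omega,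
          by intro m hm hm'; rw [Fin.lt_def] at hm hm'; simp [hm1] at hm'; omega,
          by intro m hm hm'; rw [Fin.lt_def] at hm hm'; simp [hm1, hm2] at hm hm'; omega,
          hlt, hb1⟩
      · exact key3 π h123 h132 m1 m2 j (by simp [Fin.lt_def, hm1, hm2])
          (by simp [Fin.lt_def, hm2]; omega) (by omega) (by omega)
    · -- j = i + 2
      have hj2 : j.val = i.val + 2 := by omega
      set m1 : Fin n := ⟨i.val + 1, by omega⟩ with hm1
      set m3 : Fin n := ⟨i.val + 3, by omega⟩ with hm3
      have hb1 : (π m1 : ℕ) < (π i : ℕ) := between m1 (by simp [hm1]) (by simp [hm1]; omega)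
      have hb3 : (π m3 : ℕ) < (π i : ℕ) := after m3 (by simp [hm3]; omega)
      have hne13 : (π m1 : ℕ) ≠ (π m3 : ℕ) := by
        apply pi_val_ne; intro h; apply absurd (congrArg Fin.val h); simp [hm1, hm3]
      rcases Nat.lt_or_ge (π m3 : ℕ) (π m1 : ℕ) with hlt | hge
      · refine hs ((π i : ℕ) + 1) ⟨i, m1, m3, by simp [Fin.lt_def, hm1],
          by simp [Fin.lt_def, hm1, hm3], by omega, by omega, by omega,
          by intro m hm hm'; rw [Fin.lt_def] at hm hm'; simp [hm1] at hm'; omega,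
          ?_, hlt, hb1⟩
        intro m hm hm'
        rw [Fin.lt_def] at hm hm'
        simp [hm1] at hm
        simp [hm3] at hm'
        have hmj : m = j := Fin.ext (by omega)
        rw [hmj]; omega
      · -- π m1 < π m3 : violation at m1 > i, contradicting maximality
        have : m1.val ≤ i.val := hmax m1 ⟨m3, by simp [hm1, hm3], by omega⟩
        simp [hm1] at this
  · -- i = n - 3, j = n - 1
    have hi3 : i.val + 3 = n := by omega
    have hjv : j.val = i.val + 2 := by omega
    set m1 : Fin n := ⟨i.val + 1, by omega⟩ with hm1
    set i0 : Fin n := ⟨i.val - 1, by omega⟩ with hi0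
    have hi1 : 1 ≤ i.val := by omega
    have hb1 : (π m1 : ℕ) < (π i : ℕ) := between m1 (by simp [hm1]) (by simp [hm1]; omega)
    have hne0i : (π i0 : ℕ) ≠ (π i : ℕ) := by
      apply pi_val_ne; intro h; apply absurd (congrArg Fin.val h); simp [hi0]; omega
    rcases Nat.lt_or_ge (π i0 : ℕ) (π i : ℕ) with hlt | hge
    · exact key3 π h123 h132 i0 i j (by simp [Fin.lt_def, hi0]; omega)
        (by rw [Fin.lt_def]; omega) hlt (by omega)
    · refine hs ((π i0 : ℕ) + 1) ⟨i0, i, m1, by simp [Fin.lt_def, hi0]; omega,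
        by simp [Fin.lt_def, hm1], by omega, by omega, by omega, ?_, ?_, hb1, by omega⟩
      · intro m hm hm'; rw [Fin.lt_def] at hm hm'; simp [hi0] at hm; omega
      · intro m hm hm'; rw [Fin.lt_def] at hm hm'; simp [hm1] at hm'; omega

lemma card_lt_filter (π : Equiv.Perm (Fin n)) (c : Fin n) :
    (Finset.univ.filter fun j => π j < c).card = c.val := by
  have h : (Finset.univ.filter fun j => π j < c)
      = (Finset.Iio c).map π.symm.toEmbedding := by
    ext j
    simp only [Finset.mem_filter, Finset.mem_univ, true_and, Finset.mem_map,
      Finset.mem_Iio, Equiv.coe_toEmbedding]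
    constructor
    · intro h; exact ⟨π j, h, π.symm_apply_apply j⟩
    · rintro ⟨y, hy, rfl⟩; rwa [π.apply_symm_apply]
  rw [h, Finset.card_map, Fin.card_Iio]

lemma card_gt_filter (π : Equiv.Perm (Fin n)) (c : Fin n) :
    (Finset.univ.filter fun j => c < π j).card = n - 1 - c.val := by
  have h : (Finset.univ.filter fun j => c < π j)
      = (Finset.Ioi c).map π.symm.toEmbedding := by
    ext j
    simp only [Finset.mem_filter, Finset.mem_univ, true_and, Finset.mem_map,
      Finset.mem_Ioi, Equiv.coe_toEmbedding]
    constructor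
    · intro h; exact ⟨π j, h, π.symm_apply_apply j⟩
    · rintro ⟨y, hy, rfl⟩; rwa [π.apply_symm_apply]
  rw [h, Finset.card_map, Fin.card_Ioi]

lemma lower_bound (π : Equiv.Perm (Fin n)) (hL1 : SL1 π) (i : Fin n) :
    n ≤ (π i : ℕ) + i.val + 2 := by
  rcases Nat.lt_or_ge (i.val + 2) n with h | h
  · set a : Fin n := ⟨i.val + 2, h⟩ with ha
    have hsub : Finset.Ici a ⊆ Finset.univ.filter fun j => π j < π i := by
      intro j hj
      rw [Finset.mem_Ici] at hj
      rw [Finset.mem_filter]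
      refine ⟨Finset.mem_univ _, ?_⟩
      rw [Fin.lt_def]
      exact hL1 i j (by rw [Fin.le_def] at hj; simp [ha] at hj; omega)
    have := Finset.card_le_card hsub
    rw [card_lt_filter, Fin.card_Ici] at this
    simp [ha] at this
    omega
  · omega

lemma upper_bound (π : Equiv.Perm (Fin n)) (hL1 : SL1 π) (i : Fin n) :
    (π i : ℕ) + i.val ≤ n := by
  rcases Nat.lt_or_ge i.val 2 with h | h
  · have := (π i).isLt; omega
  · set b : Fin n := ⟨i.val - 2, by omega⟩ with hb
    have hsub : Finset.Iic b ⊆ Finset.univ.filter fun j => π i < π j := by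
      intro j hj
      rw [Finset.mem_Iic] at hj
      rw [Finset.mem_filter]
      refine ⟨Finset.mem_univ _, ?_⟩
      rw [Fin.lt_def]
      exact hL1 j i (by rw [Fin.le_def] at hj; simp [hb] at hj; omega)
    have := Finset.card_le_card hsub
    rw [card_gt_filter, Fin.card_Iic] at this
    have := (π i).isLt
    simp [hb] at *
    omega

/-- Alternation of ascents and descents. -/
lemma alternation (π : Equiv.Perm (Fin n)) (hs : IsSimsun π) (h123 : ¬ Contains123 π)
    (hn : 2 ≤ n) :
    SL2 π (if (π ⟨0, by omega⟩ : ℕ) < (π ⟨1, by omega⟩ : ℕ) then 0 else 1) := by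
  set t := if (π ⟨0, by omega⟩ : ℕ) < (π ⟨1, by omega⟩ : ℕ) then 0 else 1 with ht
  have key : ∀ v : ℕ, ∀ hv : v + 1 < n,
      ((π ⟨v, by omega⟩ : ℕ) < (π ⟨v + 1, hv⟩ : ℕ)) ↔ (v + t) % 2 = 0 := by
    intro v
    induction v with
    | zero =>
      intro hv
      by_cases hasc : (π ⟨0, by omega⟩ : ℕ) < (π ⟨1, by omega⟩ : ℕ)
      · rw [ht, if_pos hasc]; simpa using hasc
      · rw [ht, if_neg hasc]; simpa using hasc
    | succ v ih =>
      intro hv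
      rw [show (⟨v + 1 + 1, hv⟩ : Fin n) = ⟨v + 2, hv⟩ from rfl]
      have hv1 : v + 1 < n := by omega
      have ihv := ih hv1
      have hne : (π ⟨v, by omega⟩ : ℕ) ≠ (π ⟨v + 1, hv1⟩ : ℕ) := by
        intro h
        have := π.injective (Fin.ext h : π ⟨v, by omega⟩ = π ⟨v + 1, hv1⟩)
        apply absurd (congrArg Fin.val this); simp
      have hne2 : (π ⟨v + 1, by omega⟩ : ℕ) ≠ (π ⟨v + 2, hv⟩ : ℕ) := by
        intro h
        have := π.injective (Fin.ext h : π ⟨v + 1, by omega⟩ = π ⟨v + 2, hv⟩)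
        apply absurd (congrArg Fin.val this); simp
      constructor
      · intro hasc
        -- ascent at v+1 : no ascent at v (else 123)
        have hdesc : ¬ (π ⟨v, by omega⟩ : ℕ) < (π ⟨v + 1, hv1⟩ : ℕ) := by
          intro hasc0
          exact h123 ⟨⟨v, by omega⟩, ⟨v + 1, hv1⟩, ⟨v + 2, hv⟩, by simp [Fin.lt_def],
            by simp [Fin.lt_def], by rw [Fin.lt_def]; exact hasc0, by rw [Fin.lt_def]; exact hasc⟩
        omega
      · intro hpar
        -- no descent at v+1 : else need ascent check at v
        by_contra hdesc
        have hd1 : (π ⟨v + 2, hv⟩ : ℕ) < (π ⟨v + 1, hv1⟩ : ℕ) := by omega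
        have hd0 : (π ⟨v + 1, hv1⟩ : ℕ) < (π ⟨v, by omega⟩ : ℕ) := by omega
        exact hs n ⟨⟨v, by omega⟩, ⟨v + 1, hv1⟩, ⟨v + 2, hv⟩, by simp [Fin.lt_def],
          by simp [Fin.lt_def], (π _).isLt, (π _).isLt, (π _).isLt,
          by intro m h1 h2; rw [Fin.lt_def] at h1 h2; simp at h1 h2; omega,
          by intro m h1 h2; rw [Fin.lt_def] at h1 h2; simp at h1 h2; omega,
          hd1, hd0⟩
  intro a b hba
  have hlt : a.val + 1 < n := hba ▸ b.isLt
  have := key a.val hlt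
  have e1 : (⟨a.val, by omega⟩ : Fin n) = a := Fin.ext rfl
  have e2 : (⟨a.val + 1, hlt⟩ : Fin n) = b := Fin.ext (by simp [hba])
  rw [e1, e2] at this
  exact this

/-- Two permutations agreeing off one point are equal. -/
lemma perm_ext_off_one (f g : Equiv.Perm (Fin n)) (x0 : Fin n)
    (h : ∀ x, x ≠ x0 → f x = g x) : f = g := by
  have hx : f x0 = g x0 := by
    by_cases hy0 : g.symm (f x0) = x0
    · conv_rhs => rw [← hy0]
      rw [g.apply_symm_apply]
    · have := h _ hy0
      rw [g.apply_symm_apply] at this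
      exact absurd (f.injective this) hy0
  ext x
  by_cases hx0 : x = x0
  · rw [hx0]; exact congrArg Fin.val hx
  · exact congrArg Fin.val (h x hx0)

lemma val_even (π : Equiv.Perm (Fin n)) {t : ℕ} (hL1 : SL1 π) (hL2 : SL2 π t)
    (i : Fin n) (h0 : (i.val + t) % 2 = 0) (h1 : i.val + 1 < n) :
    (π i : ℕ) + i.val + 2 = n := by
  set b : Fin n := ⟨i.val + 1, h1⟩ with hb
  have hasc := (hL2 i b (by simp [hb])).mpr h0
  have hub := upper_bound π hL1 b
  have hlb := lower_bound π hL1 i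
  have hbv : b.val = i.val + 1 := rfl
  omega

lemma val_odd (π : Equiv.Perm (Fin n)) {t : ℕ} (hL1 : SL1 π) (hL2 : SL2 π t)
    (i : Fin n) (h0 : (i.val + t) % 2 = 1) (h1 : 1 ≤ i.val) :
    (π i : ℕ) + i.val = n := by
  set a : Fin n := ⟨i.val - 1, by omega⟩ with ha
  have h0' : (a.val + t) % 2 = 0 := by simp [ha]; omega
  have h1' : a.val + 1 < n := by simp [ha]; omega
  have heven := val_even π hL1 hL2 a h0' h1'
  have hasc := (hL2 a i (by simp [ha]; omega)).mpr h0'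
  have hub := upper_bound π hL1 i
  have hav : a.val = i.val - 1 := rfl
  omega

lemma pit_val_even {t : ℕ} (i : Fin n) (h0 : (i.val + t) % 2 = 0) (h1 : i.val + 1 < n) :
    (pit n t i : ℕ) + i.val + 2 = n := by
  rw [pit_val, st_even n t i h0 h1]; omega

lemma pit_val_odd {t : ℕ} (i : Fin n) (h0 : (i.val + t) % 2 = 1) (h1 : 1 ≤ i.val) :
    (pit n t i : ℕ) + i.val = n := by
  have := i.isLt
  rw [pit_val, st_odd n t i h0]; omega

lemma eq_pit (π : Equiv.Perm (Fin n)) (hn : 4 ≤ n) (hL1 : SL1 π) (t : ℕ) (ht : t ≤ 1)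
    (hL2 : SL2 π t) : π = pit n t := by
  have agree : ∀ x : Fin n, ((x.val + t) % 2 = 0 → x.val + 1 < n) →
      ((x.val + t) % 2 = 1 → 1 ≤ x.val) → π x = pit n t x := by
    intro x hx1 hx2
    rcases Nat.mod_two_eq_zero_or_one (x.val + t) with h0 | h0
    · have := val_even π hL1 hL2 x h0 (hx1 h0)
      have := pit_val_even x h0 (hx1 h0)
      exact Fin.ext (by omega)
    · have := val_odd π hL1 hL2 x h0 (hx2 h0)
      have := pit_val_odd x h0 (hx2 h0)
      exact Fin.ext (by omega)
  rcases Nat.le_one_iff_eq_zero_or_eq_one.mp ht with rfl | rfl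
  · apply perm_ext_off_one π (pit n 0) ⟨n - 1, by omega⟩
    intro x hx
    have hxv : x.val ≠ n - 1 := fun h => hx (Fin.ext (by simp [h]))
    have := x.isLt
    exact agree x (fun _ => by omega) (fun h => by omega)
  · -- t = 1 : first show π 0 has value n - 1
    have h0n : (π ⟨0, by omega⟩ : ℕ) = n - 1 := by
      set i := π.symm ⟨n - 1, by omega⟩ with hi
      have hπi : (π i : ℕ) = n - 1 := by rw [hi, π.apply_symm_apply]
      have hiv : i.val = 0 := by
        by_contra hne
        have h1i : 1 ≤ i.val := by omega
        rcases Nat.lt_or_ge (i.val + 1) n with hlt | hge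
        · rcases Nat.mod_two_eq_zero_or_one (i.val + 1) with h0 | h0
          · have := val_even π hL1 hL2 i h0 hlt
            omega
          · have := val_odd π hL1 hL2 i h0 h1i
            have := i.isLt
            omega
        · have := upper_bound π hL1 i
          have := i.isLt
          omega
      have : i = ⟨0, by omega⟩ := Fin.ext hiv
      rw [← this, hπi]
    apply perm_ext_off_one π (pit n 1) ⟨n - 1, by omega⟩
    intro x hx
    have hxv : x.val ≠ n - 1 := fun h => hx (Fin.ext (by simp [h]))
    have := x.isLt
    by_cases hx0 : x.val = 0
    · have hxe : x = ⟨0, by omega⟩ := Fin.ext hx0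
      rw [hxe]
      apply Fin.ext
      rw [h0n, pit_val, st_odd n 1 ⟨0, by omega⟩ (by simp)]
      simp
    · exact agree x (fun _ => by omega) (fun _ => by omega)

end SimsunAux

open SimsunAux in
/-- For `n ≥ 4`, there are exactly `2` simsun permutations of `{1, …, n}`
avoiding both 123 and 132. -/
theorem simsun_avoid123_132_count (n : ℕ) (hn : 4 ≤ n) :
    Nat.card {π : Equiv.Perm (Fin n) //
      IsSimsun π ∧ ¬ Contains123 π ∧ ¬ Contains132 π} = 2 := by
  rw [Nat.card_eq_two_iff]
  have prop : ∀ t : ℕ, IsSimsun (pit n t) ∧ ¬ Contains123 (pit n t) ∧ ¬ Contains132 (pit n t) := by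
    intro t
    have hL1 : SL1 (pit n t) := fun a b h => pit_L1 n t a b h
    have hL2 : SL2 (pit n t) t := fun a b h => pit_L2 n t a b h
    exact ⟨simsun_of_L1_L2 _ t hL1 hL2, not123_of_L1 _ hL1, not132_of_L1 _ hL1⟩
  refine ⟨⟨pit n 0, prop 0⟩, ⟨pit n 1, prop 1⟩, ?_, ?_⟩
  · intro h
    have he : pit n 0 = pit n 1 := congrArg Subtype.val h
    have h2 : ((pit n 0) ⟨0, by omega⟩ : ℕ) = ((pit n 1) ⟨0, by omega⟩ : ℕ) := by rw [he]
    rw [pit_val, pit_val, st_even n 0 ⟨0, by omega⟩ (by simp) (by simp; omega),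
      st_odd n 1 ⟨0, by omega⟩ (by simp)] at h2
    simp at h2
    omega
  · rw [Set.eq_univ_iff_forall]
    rintro ⟨π, hs, h123, h132⟩
    have hL1 := SL1_of π hn hs h123 h132
    have hL2 := alternation π hs h123 (by omega : 2 ≤ n)
    have ht1 : (if (π ⟨0, (by omega : 0 < n)⟩ : ℕ) < (π ⟨1, by omega⟩ : ℕ) then 0 else 1) ≤ 1 := by
      split <;> omega
    have heq := eq_pit π hn hL1 _ ht1 hL2
    rcases Nat.le_one_iff_eq_zero_or_eq_one.mp ht1 with h | h
    · left; rw [h] at heq; exact Subtype.ext heq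
    · right; rw [h] at heq; exact Subtype.ext heq
end

section
/- For every n ≥ 3, the number of simsun permutations of {1,…,n} that avoid both patterns 123 and 213 equals 3. -/
/-- `π` contains the pattern 213. -/
def Contains213 {n : ℕ} (π : Equiv.Perm (Fin n)) : Prop :=
  ∃ a b c : Fin n, a < b ∧ b < c ∧ π b < π a ∧ π a < π c

namespace SimsunAux

open Equiv

abbrev Good {n : ℕ} (π : Equiv.Perm (Fin n)) : Prop :=
  IsSimsun π ∧ ¬ Contains123 π ∧ ¬ Contains213 π

def Wit {N : ℕ} (π : Equiv.Perm (Fin N)) (k : ℕ) : Prop :=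
  ∃ a b c : Fin N, a < b ∧ b < c ∧
    (π a : ℕ) < k ∧ (π b : ℕ) < k ∧ (π c : ℕ) < k ∧
    (∀ m : Fin N, a < m → m < b → k ≤ (π m : ℕ)) ∧
    (∀ m : Fin N, b < m → m < c → k ≤ (π m : ℕ)) ∧
    (π c : ℕ) < (π b : ℕ) ∧ (π b : ℕ) < (π a : ℕ)

lemma isSimsun_iff {N : ℕ} (π : Equiv.Perm (Fin N)) : IsSimsun π ↔ ∀ k, ¬ Wit π k := Iff.rfl

/-- Witness at any `k ≥ N` reduces to a consecutive descending triple. -/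
def WitTop {N : ℕ} (π : Equiv.Perm (Fin N)) : Prop :=
  ∃ a b c : Fin N, (b : ℕ) = a + 1 ∧ (c : ℕ) = b + 1 ∧
    (π c : ℕ) < (π b : ℕ) ∧ (π b : ℕ) < (π a : ℕ)

lemma wit_of_ge {N : ℕ} (π : Equiv.Perm (Fin N)) {k : ℕ} (hk : N ≤ k) :
    Wit π k ↔ WitTop π := by
  constructor
  · rintro ⟨a, b, c, hab, hbc, -, -, -, g1, g2, d1, d2⟩
    refine ⟨a, b, c, ?_, ?_, d1, d2⟩
    · rcases Nat.lt_or_ge (a + 1) (b : ℕ) with h | h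
      · set m : Fin N := ⟨a + 1, lt_trans h b.isLt⟩ with hm
        have h1 : a < m := by rw [Fin.lt_def]; simp [hm]
        have h2 : m < b := by rw [Fin.lt_def]; simpa [hm] using h
        have := g1 m h1 h2
        have := (π m).isLt
        omega
      · have := Fin.lt_def.mp hab; omega
    · rcases Nat.lt_or_ge (b + 1) (c : ℕ) with h | h
      · set m : Fin N := ⟨b + 1, lt_trans h c.isLt⟩ with hm
        have h1 : b < m := by rw [Fin.lt_def]; simp [hm]
        have h2 : m < c := by rw [Fin.lt_def]; simpa [hm] using h
        have := g2 m h1 h2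
        have := (π m).isLt
        omega
      · have := Fin.lt_def.mp hbc; omega
  · rintro ⟨a, b, c, hb, hc, d1, d2⟩
    refine ⟨a, b, c, Fin.lt_def.mpr (by omega), Fin.lt_def.mpr (by omega),
      lt_of_lt_of_le (π a).isLt hk, lt_of_lt_of_le (π b).isLt hk,
      lt_of_lt_of_le (π c).isLt hk, ?_, ?_, d1, d2⟩
    · intro m h1 h2
      have := Fin.lt_def.mp h1; have := Fin.lt_def.mp h2; omega
    · intro m h1 h2
      have := Fin.lt_def.mp h1; have := Fin.lt_def.mp h2; omega

lemma wit_of_triple {N : ℕ} (π : Equiv.Perm (Fin N)) {a b c : Fin N}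
    (hb : (b : ℕ) = a + 1) (hc : (c : ℕ) = b + 1)
    (d1 : (π c : ℕ) < (π b : ℕ)) (d2 : (π b : ℕ) < (π a : ℕ)) : Wit π N :=
  (wit_of_ge π le_rfl).mpr ⟨a, b, c, hb, hc, d1, d2⟩

lemma no_triple {N : ℕ} {π : Equiv.Perm (Fin N)} (h : IsSimsun π) {a b c : Fin N}
    (hb : (b : ℕ) = a + 1) (hc : (c : ℕ) = b + 1)
    (d1 : (π c : ℕ) < (π b : ℕ)) (d2 : (π b : ℕ) < (π a : ℕ)) : False :=
  h N (wit_of_triple π hb hc d1 d2)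

lemma not_two_smaller {N : ℕ} {π : Equiv.Perm (Fin N)}
    (h123 : ¬ Contains123 π) (h213 : ¬ Contains213 π) {a b c : Fin N}
    (hab : a < b) (hbc : b < c) (h1 : π a < π c) (h2 : π b < π c) : False := by
  have hne : π a ≠ π b := fun e => absurd (π.injective e) (ne_of_lt hab)
  rcases hne.lt_or_gt with h | h
  · exact h123 ⟨a, b, c, hab, hbc, h, h2⟩
  · exact h213 ⟨a, b, c, hab, hbc, h, h1⟩

/-- Insert the max value at the front. -/
def consMax {n : ℕ} (ρ : Equiv.Perm (Fin n)) : Equiv.Perm (Fin (n + 1)) :=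
  (finSuccEquiv n).trans ((Equiv.optionCongr ρ).trans finSuccEquivLast.symm)

@[simp] lemma consMax_zero {n : ℕ} (ρ : Equiv.Perm (Fin n)) :
    consMax ρ 0 = Fin.last n := by
  simp [consMax]

@[simp] lemma consMax_succ {n : ℕ} (ρ : Equiv.Perm (Fin n)) (i : Fin n) :
    consMax ρ i.succ = (ρ i).castSucc := by
  simp [consMax]

noncomputable def tail0 {n : ℕ} (π : Equiv.Perm (Fin (n + 1))) (h : π 0 = Fin.last n) :
    Equiv.Perm (Fin n) :=
  Equiv.ofBijective
    (fun i => (π i.succ).castPred (fun e => by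
      have := π.injective (e.trans h.symm)
      exact Fin.succ_ne_zero i this))
    (Finite.injective_iff_bijective.mp (fun i j hij => by
      have : π i.succ = π j.succ := by
        have := congrArg Fin.castSucc hij
        simpa using this
      exact Fin.succ_injective _ (π.injective this)))

lemma tail0_apply {n : ℕ} (π : Equiv.Perm (Fin (n + 1))) (h : π 0 = Fin.last n) (i : Fin n) :
    ((tail0 π h) i : ℕ) = (π i.succ : ℕ) := rfl

lemma consMax_tail0 {n : ℕ} (π : Equiv.Perm (Fin (n + 1))) (h : π 0 = Fin.last n) :
    consMax (tail0 π h) = π := by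
  apply Equiv.ext
  intro x
  induction x using Fin.cases with
  | zero => simp [h]
  | succ i =>
    apply Fin.ext
    rw [consMax_succ]
    simpa using (tail0_apply π h i)

end SimsunAux

namespace SimsunAux
open Equiv

section Transfer
variable {n : ℕ} {π : Equiv.Perm (Fin (n + 1))} {ρ : Equiv.Perm (Fin n)}
  {e : Fin n → Fin (n + 1)}

lemma wit_transfer (he : StrictMono e)
    (hv : ∀ i, (π (e i) : ℕ) = ρ i)
    (hc : ∀ m : Fin (n + 1), (∀ i, e i ≠ m) → (π m : ℕ) = n)
    {k : ℕ} (hk : k ≤ n) : Wit π k ↔ Wit ρ k := by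
  constructor
  · rintro ⟨a, b, c, hab, hbc, va, vb, vc, g1, g2, d1, d2⟩
    have him : ∀ m : Fin (n + 1), (π m : ℕ) < k → ∃ i, e i = m := by
      intro m hm
      by_contra hno
      push_neg at hno
      have := hc m hno
      omega
    obtain ⟨a', rfl⟩ := him a va
    obtain ⟨b', rfl⟩ := him b vb
    obtain ⟨c', rfl⟩ := him c vc
    refine ⟨a', b', c', he.lt_iff_lt.mp hab, he.lt_iff_lt.mp hbc,
      by rw [← hv]; exact va, by rw [← hv]; exact vb, by rw [← hv]; exact vc,
      ?_, ?_, by rw [← hv, ← hv]; exact d1, by rw [← hv, ← hv]; exact d2⟩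
    · intro m h1 h2
      rw [← hv]
      exact g1 (e m) (he h1) (he h2)
    · intro m h1 h2
      rw [← hv]
      exact g2 (e m) (he h1) (he h2)
  · rintro ⟨a, b, c, hab, hbc, va, vb, vc, g1, g2, d1, d2⟩
    refine ⟨e a, e b, e c, he hab, he hbc,
      by rw [hv]; exact va, by rw [hv]; exact vb, by rw [hv]; exact vc,
      ?_, ?_, by rw [hv, hv]; exact d1, by rw [hv, hv]; exact d2⟩
    · intro m h1 h2
      by_cases hm : ∃ i, e i = m
      · obtain ⟨i, rfl⟩ := hm
        rw [hv]
        exact g1 i (he.lt_iff_lt.mp h1) (he.lt_iff_lt.mp h2)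
      · push_neg at hm
        rw [hc m hm]
        exact hk
    · intro m h1 h2
      by_cases hm : ∃ i, e i = m
      · obtain ⟨i, rfl⟩ := hm
        rw [hv]
        exact g2 i (he.lt_iff_lt.mp h1) (he.lt_iff_lt.mp h2)
      · push_neg at hm
        rw [hc m hm]
        exact hk

lemma c123_transfer (he : StrictMono e)
    (hv : ∀ i, (π (e i) : ℕ) = ρ i)
    (hc : ∀ m : Fin (n + 1), (∀ i, e i ≠ m) → (π m : ℕ) = n)
    (hpos : ∀ m : Fin (n + 1), (∀ i, e i ≠ m) → (m : ℕ) ≤ 1) :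
    Contains123 π ↔ Contains123 ρ := by
  constructor
  · rintro ⟨a, b, c, hab, hbc, p1, p2⟩
    have him : ∀ m : Fin (n + 1), (∃ m', m < m') → (m : ℕ) ≥ 2 → ∃ i, e i = m := by
      intro m hlt hm2
      by_contra hno
      push_neg at hno
      exact absurd (hpos m hno) (by omega)
    have hima : ∃ i, e i = a := by
      by_contra hno
      push_neg at hno
      have := hc a hno
      have h1 := Fin.lt_def.mp p1
      have := (π b).isLt
      omega
    have himb : ∃ i, e i = b := by
      by_contra hno
      push_neg at hno
      have := hc b hno
      have h1 := Fin.lt_def.mp p2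
      have := (π c).isLt
      omega
    have himc : ∃ i, e i = c := by
      by_contra hno
      push_neg at hno
      have := hpos c hno
      have h1 := Fin.lt_def.mp hab
      have h2 := Fin.lt_def.mp hbc
      omega
    obtain ⟨a', rfl⟩ := hima
    obtain ⟨b', rfl⟩ := himb
    obtain ⟨c', rfl⟩ := himc
    refine ⟨a', b', c', he.lt_iff_lt.mp hab, he.lt_iff_lt.mp hbc, ?_, ?_⟩
    · rw [Fin.lt_def] at p1 ⊢
      rw [← hv, ← hv]
      exact p1
    · rw [Fin.lt_def] at p2 ⊢
      rw [← hv, ← hv]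
      exact p2
  · rintro ⟨a, b, c, hab, hbc, p1, p2⟩
    refine ⟨e a, e b, e c, he hab, he hbc, ?_, ?_⟩
    · rw [Fin.lt_def] at p1 ⊢
      rw [hv, hv]
      exact p1
    · rw [Fin.lt_def] at p2 ⊢
      rw [hv, hv]
      exact p2

lemma c213_transfer (he : StrictMono e)
    (hv : ∀ i, (π (e i) : ℕ) = ρ i)
    (hc : ∀ m : Fin (n + 1), (∀ i, e i ≠ m) → (π m : ℕ) = n)
    (hpos : ∀ m : Fin (n + 1), (∀ i, e i ≠ m) → (m : ℕ) ≤ 1) :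
    Contains213 π ↔ Contains213 ρ := by
  constructor
  · rintro ⟨a, b, c, hab, hbc, p1, p2⟩
    have hima : ∃ i, e i = a := by
      by_contra hno
      push_neg at hno
      have := hc a hno
      have h1 := Fin.lt_def.mp p2
      have := (π c).isLt
      omega
    have himb : ∃ i, e i = b := by
      by_contra hno
      push_neg at hno
      have := hc b hno
      have h1 := Fin.lt_def.mp p1
      have := (π a).isLt
      omega
    have himc : ∃ i, e i = c := by
      by_contra hno
      push_neg at hno
      have := hpos c hno
      have h1 := Fin.lt_def.mp hab
      have h2 := Fin.lt_def.mp hbc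
      omega
    obtain ⟨a', rfl⟩ := hima
    obtain ⟨b', rfl⟩ := himb
    obtain ⟨c', rfl⟩ := himc
    refine ⟨a', b', c', he.lt_iff_lt.mp hab, he.lt_iff_lt.mp hbc, ?_, ?_⟩
    · rw [Fin.lt_def] at p1 ⊢
      rw [← hv, ← hv]
      exact p1
    · rw [Fin.lt_def] at p2 ⊢
      rw [← hv, ← hv]
      exact p2
  · rintro ⟨a, b, c, hab, hbc, p1, p2⟩
    refine ⟨e a, e b, e c, he hab, he hbc, ?_, ?_⟩
    · rw [Fin.lt_def] at p1 ⊢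
      rw [hv, hv]
      exact p1
    · rw [Fin.lt_def] at p2 ⊢
      rw [hv, hv]
      exact p2

end Transfer
end SimsunAux

namespace SimsunAux
open Equiv

section Cases
variable {m : ℕ}

lemma consMax_val_zero (ρ : Equiv.Perm (Fin (m + 3))) (j : Fin (m + 4)) (h0 : (j : ℕ) = 0) :
    (consMax ρ j : ℕ) = m + 3 := by
  have : j = 0 := Fin.ext (by simpa using h0)
  rw [this, consMax_zero]
  simp

lemma consMax_val_pos (ρ : Equiv.Perm (Fin (m + 3))) {j : Fin (m + 4)} {i : ℕ}
    (hi : i < m + 3) (hj : (j : ℕ) = i + 1) :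
    (consMax ρ j : ℕ) = ρ ⟨i, hi⟩ := by
  have hj' : j = Fin.succ ⟨i, hi⟩ := Fin.ext (by simpa using hj)
  rw [hj', consMax_succ]
  simp

lemma perm_val_ne {N : ℕ} (π : Equiv.Perm (Fin N)) {x y : Fin N} (h : x ≠ y) :
    (π x : ℕ) ≠ (π y : ℕ) := fun e => h (π.injective (Fin.ext e))

lemma good_case0 (ρ : Equiv.Perm (Fin (m + 3))) :
    Good (consMax ρ) ↔
      Good ρ ∧ (ρ ⟨0, by omega⟩ : ℕ) < (ρ ⟨1, by omega⟩ : ℕ) := by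
  have he : StrictMono (Fin.succ : Fin (m + 3) → Fin (m + 4)) := by
    intro a b h
    rw [Fin.lt_def] at h ⊢
    simpa using h
  have hv : ∀ i, ((consMax ρ) i.succ : ℕ) = ρ i := by
    intro i
    rw [consMax_succ]
    simp
  have hc : ∀ m' : Fin (m + 4), (∀ i, Fin.succ i ≠ m') → ((consMax ρ) m' : ℕ) = m + 3 := by
    intro m' hno
    induction m' using Fin.cases with
    | zero => rw [consMax_zero]; simp
    | succ i => exact absurd rfl (hno i)
  have hpos : ∀ m' : Fin (m + 4), (∀ i, Fin.succ i ≠ m') → (m' : ℕ) ≤ 1 := by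
    intro m' hno
    induction m' using Fin.cases with
    | zero => simp
    | succ i => exact absurd rfl (hno i)
  have h01 : (⟨0, by omega⟩ : Fin (m + 3)) ≠ ⟨1, by omega⟩ := by simp
  constructor
  · rintro ⟨hs, h1, h2⟩
    have hρs : IsSimsun ρ := by
      intro k w
      have w' : Wit ρ k := w
      by_cases hk : k ≤ m + 3
      · exact hs k ((wit_transfer he hv hc hk).mpr w')
      · rw [wit_of_ge ρ (by omega)] at w'
        have w3 : Wit ρ (m + 3) := (wit_of_ge ρ le_rfl).mpr w'
        exact hs (m + 3) ((wit_transfer he hv hc le_rfl).mpr w3)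
    refine ⟨⟨hρs, (c123_transfer he hv hc hpos).not.mp h1,
      (c213_transfer he hv hc hpos).not.mp h2⟩, ?_⟩
    have hne := perm_val_ne ρ h01
    have hnlt : ¬ ((ρ ⟨1, by omega⟩ : ℕ) < (ρ ⟨0, by omega⟩ : ℕ)) := by
      intro hlt
      apply no_triple hs (a := ⟨0, by omega⟩) (b := ⟨1, by omega⟩) (c := ⟨2, by omega⟩)
        rfl rfl
      · rw [consMax_val_pos ρ (i := 1) (by omega) rfl,
          consMax_val_pos ρ (i := 0) (by omega) rfl]
        exact hlt
      · rw [consMax_val_pos ρ (i := 0) (by omega) rfl, consMax_val_zero ρ _ rfl]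
        exact (ρ _).isLt
    omega
  · rintro ⟨⟨hs, h1, h2⟩, hasc⟩
    refine ⟨?_, (c123_transfer he hv hc hpos).not.mpr h1,
      (c213_transfer he hv hc hpos).not.mpr h2⟩
    intro k w
    have w' : Wit (consMax ρ) k := w
    by_cases hk : k ≤ m + 3
    · exact hs k ((wit_transfer he hv hc hk).mp w')
    · rw [wit_of_ge _ (by omega)] at w'
      obtain ⟨a, b, c, hb, hcc, d1, d2⟩ := w'
      have hal := a.isLt
      have hbl := b.isLt
      have hcl := c.isLt
      rcases Nat.eq_zero_or_pos (a : ℕ) with h0 | h0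
      · -- a = 0 : descent ρ0 > ρ1 contradicts hasc
        have q0 : (0 : ℕ) < m + 3 := by omega
        have q1 : (1 : ℕ) < m + 3 := by omega
        have v2 : ((consMax ρ) b : ℕ) = ρ ⟨0, q0⟩ := consMax_val_pos ρ q0 (by omega)
        have v3 : ((consMax ρ) c : ℕ) = ρ ⟨1, q1⟩ := consMax_val_pos ρ q1 (by omega)
        rw [v2, v3] at d1
        omega
      · -- a ≥ 1 : consecutive descent inside ρ
        have p1 : (a : ℕ) - 1 < m + 3 := by omega
        have p2 : (a : ℕ) < m + 3 := by omega
        have p3 : (a : ℕ) + 1 < m + 3 := by omega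
        have v1 : ((consMax ρ) a : ℕ) = ρ ⟨(a : ℕ) - 1, p1⟩ := consMax_val_pos ρ p1 (by omega)
        have v2 : ((consMax ρ) b : ℕ) = ρ ⟨(a : ℕ), p2⟩ := consMax_val_pos ρ p2 (by omega)
        have v3 : ((consMax ρ) c : ℕ) = ρ ⟨(a : ℕ) + 1, p3⟩ := consMax_val_pos ρ p3 (by omega)
        exact no_triple hs (a := ⟨(a : ℕ) - 1, p1⟩) (b := ⟨(a : ℕ), p2⟩)
          (c := ⟨(a : ℕ) + 1, p3⟩)
          (show (a : ℕ) = (a : ℕ) - 1 + 1 by omega) rfl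
          (by rw [← v2, ← v3]; exact d1) (by rw [← v1, ← v2]; exact d2)

end Cases
end SimsunAux

namespace SimsunAux
open Equiv

section Cases2
variable {m : ℕ}

/-- Insert the max value at position 1. -/
def consTwo (ρ : Equiv.Perm (Fin (m + 3))) : Equiv.Perm (Fin (m + 4)) :=
  (Equiv.swap ⟨0, by omega⟩ ⟨1, by omega⟩).trans (consMax ρ)

lemma consTwo_val_zero (ρ : Equiv.Perm (Fin (m + 3))) (j : Fin (m + 4)) (h0 : (j : ℕ) = 0) :
    (consTwo ρ j : ℕ) = ρ ⟨0, by omega⟩ := by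
  have hj : j = ⟨0, by omega⟩ := Fin.ext h0
  rw [hj, consTwo, Equiv.trans_apply, Equiv.swap_apply_left]
  exact consMax_val_pos ρ (by omega) rfl

lemma consTwo_val_one (ρ : Equiv.Perm (Fin (m + 3))) (j : Fin (m + 4)) (h0 : (j : ℕ) = 1) :
    (consTwo ρ j : ℕ) = m + 3 := by
  have hj : j = ⟨1, by omega⟩ := Fin.ext h0
  rw [hj, consTwo, Equiv.trans_apply, Equiv.swap_apply_right]
  exact consMax_val_zero ρ _ rfl

lemma consTwo_val_ge (ρ : Equiv.Perm (Fin (m + 3))) (j : Fin (m + 4)) {i : ℕ}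
    (hi : i < m + 3) (hj : (j : ℕ) = i + 1) (h2 : 2 ≤ (j : ℕ)) :
    (consTwo ρ j : ℕ) = ρ ⟨i, hi⟩ := by
  rw [consTwo, Equiv.trans_apply,
    Equiv.swap_apply_of_ne_of_ne
      (fun e => by have : (j : ℕ) = 0 := congrArg Fin.val e; omega)
      (fun e => by have : (j : ℕ) = 1 := congrArg Fin.val e; omega)]
  exact consMax_val_pos ρ hi hj

def emb1 (i : Fin (m + 3)) : Fin (m + 4) :=
  if (i : ℕ) = 0 then ⟨0, by omega⟩ else ⟨(i : ℕ) + 1, by have := i.isLt; omega⟩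

lemma emb1_val_zero (i : Fin (m + 3)) (h : (i : ℕ) = 0) : (emb1 i : ℕ) = 0 := by
  unfold emb1
  rw [if_pos h]

lemma emb1_val_pos (i : Fin (m + 3)) (h : (i : ℕ) ≠ 0) : (emb1 i : ℕ) = (i : ℕ) + 1 := by
  unfold emb1
  rw [if_neg h]

lemma emb1_strictMono : StrictMono (emb1 : Fin (m + 3) → Fin (m + 4)) := by
  intro a b h
  have h' := Fin.lt_def.mp h
  rw [Fin.lt_def]
  by_cases ha : (a : ℕ) = 0
  · rw [emb1_val_zero a ha]
    rw [emb1_val_pos b (by omega)]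
    omega
  · rw [emb1_val_pos a ha, emb1_val_pos b (by omega)]
    omega

set_option maxHeartbeats 1000000 in
lemma good_case1 (ρ : Equiv.Perm (Fin (m + 3))) :
    Good (consTwo ρ) ↔
      Good ρ ∧ (ρ ⟨1, by omega⟩ : ℕ) < (ρ ⟨0, by omega⟩ : ℕ) := by
  have q0 : (0 : ℕ) < m + 3 := by omega
  have q1 : (1 : ℕ) < m + 3 := by omega
  have q2 : (2 : ℕ) < m + 3 := by omega
  have he : StrictMono (emb1 : Fin (m + 3) → Fin (m + 4)) := emb1_strictMono
  have hv : ∀ i, ((consTwo ρ) (emb1 i) : ℕ) = ρ i := by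
    intro i
    by_cases h : (i : ℕ) = 0
    · have hi0 : i = ⟨0, q0⟩ := Fin.ext h
      rw [hi0]
      exact consTwo_val_zero ρ _ (emb1_val_zero _ rfl)
    · rw [consTwo_val_ge ρ _ i.isLt (emb1_val_pos i h) (by rw [emb1_val_pos i h]; omega)]
  have hone : ∀ m' : Fin (m + 4), (∀ i, emb1 i ≠ m') → (m' : ℕ) = 1 := by
    intro m' hno
    by_contra hne
    rcases Nat.eq_zero_or_pos (m' : ℕ) with h0 | h0
    · exact hno ⟨0, q0⟩ (Fin.ext (by rw [emb1_val_zero _ rfl]; omega))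
    · have h2 : 2 ≤ (m' : ℕ) := by omega
      have hml := m'.isLt
      refine hno ⟨(m' : ℕ) - 1, by omega⟩ (Fin.ext ?_)
      rw [emb1_val_pos _ (show ((m' : ℕ) - 1 : ℕ) ≠ 0 by omega)]
      show (m' : ℕ) - 1 + 1 = (m' : ℕ)
      omega
  have hc : ∀ m' : Fin (m + 4), (∀ i, emb1 i ≠ m') → ((consTwo ρ) m' : ℕ) = m + 3 :=
    fun m' hno => consTwo_val_one ρ m' (hone m' hno)
  have hpos : ∀ m' : Fin (m + 4), (∀ i, emb1 i ≠ m') → (m' : ℕ) ≤ 1 :=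
    fun m' hno => le_of_eq (hone m' hno)
  have h01 : (⟨1, q1⟩ : Fin (m + 3)) ≠ ⟨0, q0⟩ :=
    fun e => absurd (congrArg Fin.val e) (show (1 : ℕ) ≠ 0 by omega)
  constructor
  · rintro ⟨hs, h1, h2⟩
    have hρs : IsSimsun ρ := by
      intro k w
      have w' : Wit ρ k := w
      by_cases hk : k ≤ m + 3
      · exact hs k ((wit_transfer he hv hc hk).mpr w')
      · rw [wit_of_ge ρ (by omega)] at w'
        have w3 : Wit ρ (m + 3) := (wit_of_ge ρ le_rfl).mpr w'
        exact hs (m + 3) ((wit_transfer he hv hc le_rfl).mpr w3)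
    refine ⟨⟨hρs, (c123_transfer he hv hc hpos).not.mp h1,
      (c213_transfer he hv hc hpos).not.mp h2⟩, ?_⟩
    -- forcing: the value m+2 must sit at position 0
    have hv1 : ((consTwo ρ) ⟨1, by omega⟩ : ℕ) = m + 3 := consTwo_val_one ρ _ rfl
    have hv0 : ((consTwo ρ) ⟨0, by omega⟩ : ℕ) = (ρ ⟨0, q0⟩ : ℕ) := consTwo_val_zero ρ _ rfl
    have hv2 : ((consTwo ρ) ⟨2, by omega⟩ : ℕ) = (ρ ⟨1, q1⟩ : ℕ) :=
      consTwo_val_ge ρ _ q1 (show (2 : ℕ) = 1 + 1 by omega) (show (2 : ℕ) ≤ 2 by omega)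
    have hne01 : ((consTwo ρ) ⟨0, by omega⟩ : ℕ) ≠ ((consTwo ρ) ⟨1, by omega⟩ : ℕ) :=
      perm_val_ne _ (fun e => absurd (congrArg Fin.val e) (show (0 : ℕ) ≠ 1 by omega))
    obtain ⟨d, hd⟩ : ∃ d : Fin (m + 4), (consTwo ρ) d = ⟨m + 2, by omega⟩ :=
      ⟨(consTwo ρ).symm ⟨m + 2, by omega⟩, Equiv.apply_symm_apply _ _⟩
    have hdval : ((consTwo ρ) d : ℕ) = m + 2 := by rw [hd]
    have hd1 : (d : ℕ) ≠ 1 := by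
      intro h
      rw [consTwo_val_one ρ d h] at hdval
      omega
    have hdl := d.isLt
    have hd0 : (d : ℕ) = 0 := by
      by_contra hd0
      have hd2 : 2 ≤ (d : ℕ) := by omega
      rcases Nat.lt_or_ge (d : ℕ) 3 with h3 | h3
      · -- d = 2 : consecutive triple (1,2,3) descending
        have hd2' : (d : ℕ) = 2 := by omega
        have hv3 : ((consTwo ρ) ⟨3, by omega⟩ : ℕ) = (ρ ⟨2, q2⟩ : ℕ) :=
          consTwo_val_ge ρ _ q2 (show (3 : ℕ) = 2 + 1 by omega) (show (2 : ℕ) ≤ 3 by omega)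
        have hde : d = ⟨2, by omega⟩ := Fin.ext hd2'
        rw [hde] at hdval
        have hne32 : ((consTwo ρ) ⟨3, by omega⟩ : ℕ) ≠ ((consTwo ρ) ⟨2, by omega⟩ : ℕ) :=
          perm_val_ne _ (fun e => absurd (congrArg Fin.val e) (show (3 : ℕ) ≠ 2 by omega))
        have hne31 : ((consTwo ρ) ⟨3, by omega⟩ : ℕ) ≠ ((consTwo ρ) ⟨1, by omega⟩ : ℕ) :=
          perm_val_ne _ (fun e => absurd (congrArg Fin.val e) (show (3 : ℕ) ≠ 1 by omega))
        have hlt3 := (((consTwo ρ)) (⟨3, by omega⟩ : Fin (m + 4))).isLt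
        refine no_triple hs (a := (⟨1, by omega⟩ : Fin (m + 4))) (b := ⟨2, by omega⟩)
          (c := ⟨3, by omega⟩) (show (2 : ℕ) = 1 + 1 by omega)
          (show (3 : ℕ) = 2 + 1 by omega) ?_ ?_
        · omega
        · omega
      · -- d ≥ 3 : positions 0 and 2 both carry smaller values than position d
        have hne0d : ((consTwo ρ) ⟨0, by omega⟩ : ℕ) ≠ ((consTwo ρ) d : ℕ) :=
          perm_val_ne _ (fun e => by
            have : (0 : ℕ) = (d : ℕ) := congrArg Fin.val e
            omega)
        have hne2d : ((consTwo ρ) ⟨2, by omega⟩ : ℕ) ≠ ((consTwo ρ) d : ℕ) :=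
          perm_val_ne _ (fun e => by
            have : (2 : ℕ) = (d : ℕ) := congrArg Fin.val e
            omega)
        have hne21 : ((consTwo ρ) ⟨2, by omega⟩ : ℕ) ≠ ((consTwo ρ) ⟨1, by omega⟩ : ℕ) :=
          perm_val_ne _ (fun e => absurd (congrArg Fin.val e) (show (2 : ℕ) ≠ 1 by omega))
        have hlt0 := (((consTwo ρ)) (⟨0, by omega⟩ : Fin (m + 4))).isLt
        have hlt2 := (((consTwo ρ)) (⟨2, by omega⟩ : Fin (m + 4))).isLt
        refine not_two_smaller h1 h2 (a := (⟨0, by omega⟩ : Fin (m + 4))) (b := ⟨2, by omega⟩)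
          (c := d) (Fin.lt_def.mpr (show (0 : ℕ) < 2 by omega))
          (Fin.lt_def.mpr (show (2 : ℕ) < (d : ℕ) by omega)) ?_ ?_
        · rw [Fin.lt_def]
          omega
        · rw [Fin.lt_def]
          omega
    -- so ρ 0 = m + 2 is the largest value of ρ
    rw [consTwo_val_zero ρ d hd0] at hdval
    have hne := perm_val_ne ρ h01
    have := (ρ (⟨1, q1⟩ : Fin (m + 3))).isLt
    omega
  · rintro ⟨⟨hs, h1, h2⟩, hdesc⟩
    refine ⟨?_, (c123_transfer he hv hc hpos).not.mpr h1,
      (c213_transfer he hv hc hpos).not.mpr h2⟩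
    intro k w
    have w' : Wit (consTwo ρ) k := w
    by_cases hk : k ≤ m + 3
    · exact hs k ((wit_transfer he hv hc hk).mp w')
    · rw [wit_of_ge _ (by omega)] at w'
      obtain ⟨a, b, c, hb, hcc, d1, d2⟩ := w'
      have hal := a.isLt
      have hbl := b.isLt
      have hcl := c.isLt
      rcases Nat.lt_or_ge (a : ℕ) 2 with h0 | h0
      · rcases Nat.eq_zero_or_pos (a : ℕ) with h00 | h00
        · -- a = 0 : π 1 = max cannot be below π 0
          rw [consTwo_val_one ρ b (by omega)] at d2
          rw [consTwo_val_zero ρ a (by omega)] at d2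
          have := (ρ (⟨0, q0⟩ : Fin (m + 3))).isLt
          omega
        · -- a = 1 : descent ρ1 > ρ2 plus hdesc gives triple in ρ
          rw [consTwo_val_ge ρ c q2 (by omega) (by omega),
            consTwo_val_ge ρ b q1 (by omega) (by omega)] at d1
          exact no_triple hs (a := ⟨0, q0⟩) (b := ⟨1, q1⟩) (c := ⟨2, q2⟩)
            (show (1 : ℕ) = 0 + 1 by omega) (show (2 : ℕ) = 1 + 1 by omega) d1 hdesc
      · -- a ≥ 2 : consecutive descent inside ρ
        have p1 : (a : ℕ) - 1 < m + 3 := by omega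
        have p2 : (a : ℕ) < m + 3 := by omega
        have p3 : (a : ℕ) + 1 < m + 3 := by omega
        rw [consTwo_val_ge ρ b p2 (by omega) (by omega),
          consTwo_val_ge ρ a p1 (by omega) (by omega)] at d2
        rw [consTwo_val_ge ρ c p3 (by omega) (by omega),
          consTwo_val_ge ρ b p2 (by omega) (by omega)] at d1
        exact no_triple hs (a := ⟨(a : ℕ) - 1, p1⟩) (b := ⟨(a : ℕ), p2⟩)
          (c := ⟨(a : ℕ) + 1, p3⟩)
          (show (a : ℕ) = (a : ℕ) - 1 + 1 by omega) rfl d1 d2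

end Cases2
end SimsunAux

namespace SimsunAux
open Equiv

section Bij
variable {m : ℕ}

noncomputable def up (ρ : Equiv.Perm (Fin (m + 3))) : Equiv.Perm (Fin (m + 4)) :=
  if (ρ ⟨0, by omega⟩ : ℕ) < (ρ ⟨1, by omega⟩ : ℕ) then consMax ρ else consTwo ρ

lemma h01' : (⟨0, by omega⟩ : Fin (m + 3)) ≠ ⟨1, by omega⟩ :=
  fun e => absurd (congrArg Fin.val e) (show (0 : ℕ) ≠ 1 by omega)

lemma good_up (ρ : Equiv.Perm (Fin (m + 3))) (h : Good ρ) : Good (up ρ) := by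
  unfold up
  split_ifs with hlt
  · exact (good_case0 ρ).mpr ⟨h, hlt⟩
  · refine (good_case1 ρ).mpr ⟨h, ?_⟩
    have := perm_val_ne ρ (h01' (m := m))
    omega

lemma consMax_inj {ρ ρ' : Equiv.Perm (Fin (m + 3))} (h : consMax ρ = consMax ρ') :
    ρ = ρ' := by
  apply Equiv.ext
  intro i
  have := Equiv.ext_iff.mp h i.succ
  rw [consMax_succ, consMax_succ] at this
  exact Fin.castSucc_inj.mp this

lemma consMax_ne_consTwo (ρ ρ' : Equiv.Perm (Fin (m + 3))) :
    consMax ρ ≠ consTwo ρ' := by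
  intro h
  have := Equiv.ext_iff.mp h ⟨0, by omega⟩
  have hval := congrArg Fin.val this
  rw [consMax_val_zero ρ _ rfl, consTwo_val_zero ρ' _ rfl] at hval
  have := (ρ' (⟨0, by omega⟩ : Fin (m + 3))).isLt
  omega

lemma consTwo_inj {ρ ρ' : Equiv.Perm (Fin (m + 3))} (h : consTwo ρ = consTwo ρ') :
    ρ = ρ' := by
  apply consMax_inj
  apply Equiv.ext
  intro x
  have := Equiv.ext_iff.mp h ((Equiv.swap (⟨0, by omega⟩ : Fin (m + 4)) ⟨1, by omega⟩) x)
  rw [consTwo, consTwo, Equiv.trans_apply, Equiv.trans_apply, Equiv.swap_apply_self] at this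
  exact this

lemma up_inj {ρ ρ' : Equiv.Perm (Fin (m + 3))} (h : up ρ = up ρ') : ρ = ρ' := by
  unfold up at h
  split_ifs at h with h1 h2 h2
  · exact consMax_inj h
  · exact absurd h (consMax_ne_consTwo ρ ρ')
  · exact absurd h.symm (consMax_ne_consTwo ρ' ρ)
  · exact consTwo_inj h

lemma up_surj (π : Equiv.Perm (Fin (m + 4))) (h : Good π) :
    ∃ ρ : Equiv.Perm (Fin (m + 3)), Good ρ ∧ up ρ = π := by
  obtain ⟨hs, h1, h2⟩ := h
  obtain ⟨p, hp⟩ : ∃ p : Fin (m + 4), π p = ⟨m + 3, by omega⟩ :=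
    ⟨π.symm ⟨m + 3, by omega⟩, Equiv.apply_symm_apply _ _⟩
  have hpval : (π p : ℕ) = m + 3 := by rw [hp]
  have hple : (p : ℕ) ≤ 1 := by
    by_contra hgt
    have hne0 : ((π ⟨0, by omega⟩ : Fin (m + 4)) : ℕ) ≠ (π p : ℕ) :=
      perm_val_ne _ (fun e => by
        have : (0 : ℕ) = (p : ℕ) := congrArg Fin.val e
        omega)
    have hne1 : ((π ⟨1, by omega⟩ : Fin (m + 4)) : ℕ) ≠ (π p : ℕ) :=
      perm_val_ne _ (fun e => by
        have : (1 : ℕ) = (p : ℕ) := congrArg Fin.val e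
        omega)
    have hl0 := (π (⟨0, by omega⟩ : Fin (m + 4))).isLt
    have hl1 := (π (⟨1, by omega⟩ : Fin (m + 4))).isLt
    exact not_two_smaller h1 h2 (a := (⟨0, by omega⟩ : Fin (m + 4))) (b := ⟨1, by omega⟩)
      (c := p) (Fin.lt_def.mpr (show (0 : ℕ) < 1 by omega))
      (Fin.lt_def.mpr (show (1 : ℕ) < (p : ℕ) by omega))
      (Fin.lt_def.mpr (by omega)) (Fin.lt_def.mpr (by omega))
  rcases Nat.eq_zero_or_pos (p : ℕ) with h0 | hpos
  · -- the max sits at position 0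
    have hz : π 0 = Fin.last (m + 3) := by
      have e0 : (0 : Fin (m + 4)) = p := Fin.ext (by simp [h0])
      rw [e0, hp]
      exact Fin.ext rfl
    refine ⟨tail0 π hz, ?_, ?_⟩
    · exact ((good_case0 (tail0 π hz)).mp (by rw [consMax_tail0 π hz]; exact ⟨hs, h1, h2⟩)).1
    · have hasc := ((good_case0 (tail0 π hz)).mp
        (by rw [consMax_tail0 π hz]; exact ⟨hs, h1, h2⟩)).2
      unfold up
      rw [if_pos hasc]
      exact consMax_tail0 π hz
  · -- the max sits at position 1
    have hp1 : (p : ℕ) = 1 := by omega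
    have hz : ((Equiv.swap (⟨0, by omega⟩ : Fin (m + 4)) ⟨1, by omega⟩).trans π) 0
        = Fin.last (m + 3) := by
      show π ((Equiv.swap (⟨0, by omega⟩ : Fin (m + 4)) ⟨1, by omega⟩) 0) = Fin.last (m + 3)
      have e0 : (0 : Fin (m + 4)) = ⟨0, by omega⟩ := Fin.ext (by simp)
      rw [e0, Equiv.swap_apply_left]
      have e1 : (⟨1, by omega⟩ : Fin (m + 4)) = p := Fin.ext (show (1 : ℕ) = (p : ℕ) by omega)
      rw [e1, hp]
      exact Fin.ext rfl
    set π' := (Equiv.swap (⟨0, by omega⟩ : Fin (m + 4)) ⟨1, by omega⟩).trans π with hπ'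
    have hct : consTwo (tail0 π' hz) = π := by
      rw [consTwo, consMax_tail0 π' hz, hπ']
      apply Equiv.ext
      intro x
      rw [Equiv.trans_apply, Equiv.trans_apply, Equiv.swap_apply_self]
    refine ⟨tail0 π' hz, ?_, ?_⟩
    · exact ((good_case1 (tail0 π' hz)).mp (by rw [hct]; exact ⟨hs, h1, h2⟩)).1
    · have hdesc := ((good_case1 (tail0 π' hz)).mp (by rw [hct]; exact ⟨hs, h1, h2⟩)).2
      unfold up
      rw [if_neg (by omega)]
      exact hct

lemma card_step (m : ℕ) :
    Nat.card {π : Equiv.Perm (Fin (m + 4)) // Good π} =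
      Nat.card {ρ : Equiv.Perm (Fin (m + 3)) // Good ρ} := by
  refine (Nat.card_eq_of_bijective
    (fun ρ => (⟨up ρ.1, good_up ρ.1 ρ.2⟩ :
      {π : Equiv.Perm (Fin (m + 4)) // Good π})) ⟨?_, ?_⟩).symm
  · intro ρ ρ' h
    exact Subtype.ext (up_inj (congrArg Subtype.val h))
  · intro π
    obtain ⟨ρ, hρ, hup⟩ := up_surj π.1 π.2
    exact ⟨⟨ρ, hρ⟩, Subtype.ext hup⟩

end Bij
end SimsunAux

namespace SimsunAux
open Equiv

instance {N : ℕ} (π : Equiv.Perm (Fin N)) (k : ℕ) : Decidable (Wit π k) := by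
  unfold Wit; infer_instance

instance {N : ℕ} (π : Equiv.Perm (Fin N)) : Decidable (Contains123 π) := by
  unfold Contains123; infer_instance

instance {N : ℕ} (π : Equiv.Perm (Fin N)) : Decidable (Contains213 π) := by
  unfold Contains213; infer_instance

lemma base3 : Nat.card {π : Equiv.Perm (Fin 3) // Good π} = 3 := by
  have e : ∀ π : Equiv.Perm (Fin 3), Good π ↔
      ((∀ k, k < 4 → ¬ Wit π k) ∧ ¬ Contains123 π ∧ ¬ Contains213 π) := by
    intro π
    constructor
    · rintro ⟨hs, h1, h2⟩
      exact ⟨fun k _ => hs k, h1, h2⟩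
    · rintro ⟨hb, h1, h2⟩
      refine ⟨?_, h1, h2⟩
      intro k w
      have w' : Wit π k := w
      by_cases hk : k < 4
      · exact hb k hk w'
      · rw [wit_of_ge π (by omega)] at w'
        exact hb 3 (by omega) ((wit_of_ge π le_rfl).mpr w')
  rw [Nat.card_congr (Equiv.subtypeEquivRight e), Nat.card_eq_fintype_card]
  decide

end SimsunAux


/-- For `n ≥ 3`, there are exactly `3` simsun permutations of `{1, …, n}`
avoiding both 123 and 213. -/
theorem simsun_avoid123_213_count (n : ℕ) (hn : 3 ≤ n) :
    Nat.card {π : Equiv.Perm (Fin n) //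
      IsSimsun π ∧ ¬ Contains123 π ∧ ¬ Contains213 π} = 3 := by
  obtain ⟨m, rfl⟩ : ∃ m, n = m + 3 := ⟨n - 3, by omega⟩
  clear hn
  induction m with
  | zero => exact SimsunAux.base3
  | succ k ih => exact (SimsunAux.card_step k).trans ih
end

section
/- For every n ≥ 5, there is no simsun permutation of {1,…,n} avoiding both patterns 123 and 231, and there is no simsun permutation of {1,…,n} avoiding both patterns 123 and 312. -/
/-- `π` contains the pattern 231. -/
def Contains231 {n : ℕ} (π : Equiv.Perm (Fin n)) : Prop :=
  ∃ a b c : Fin n, a < b ∧ b < c ∧ π c < π a ∧ π a < π b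

def Bdd (σ : Equiv.Perm (Fin 5)) : Prop :=
  ∀ k ∈ Finset.range 6, ¬ ∃ a b c : Fin 5, a < b ∧ b < c ∧
    (σ a : ℕ) < k ∧ (σ b : ℕ) < k ∧ (σ c : ℕ) < k ∧
    (∀ m : Fin 5, a < m → m < b → k ≤ (σ m : ℕ)) ∧
    (∀ m : Fin 5, b < m → m < c → k ≤ (σ m : ℕ)) ∧
    (σ c : ℕ) < (σ b : ℕ) ∧ (σ b : ℕ) < (σ a : ℕ)

instance : DecidablePred (Contains123 (n := 5)) := fun _ => by unfold Contains123; infer_instance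
instance : DecidablePred (Contains231 (n := 5)) := fun _ => by unfold Contains231; infer_instance
instance : DecidablePred (Contains312 (n := 5)) := fun _ => by unfold Contains312; infer_instance
instance : DecidablePred Bdd := fun _ => by unfold Bdd; infer_instance

set_option maxHeartbeats 4000000 in
set_option maxRecDepth 10000 in
theorem key5 : ∀ σ : Equiv.Perm (Fin 5), Bdd σ →
    (Contains123 σ ∨ Contains231 σ) ∧ (Contains123 σ ∨ Contains312 σ) := by decide

theorem main (n : ℕ) (hn : 5 ≤ n) (π : Equiv.Perm (Fin n)) (hs : IsSimsun π) :
    (Contains123 π ∨ Contains231 π) ∧ (Contains123 π ∨ Contains312 π) := by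
  classical
  set P : Finset (Fin n) := Finset.univ.filter (fun i => (π i : ℕ) < 5) with hP
  have hcard : P.card = 5 := by
    have himg : P = Finset.image (fun j : Fin 5 => π.symm (Fin.castLE hn j)) Finset.univ := by
      ext i
      simp only [hP, Finset.mem_filter, Finset.mem_univ, true_and, Finset.mem_image]
      constructor
      · intro hi
        refine ⟨⟨(π i : ℕ), hi⟩, ?_⟩
        have : (Fin.castLE hn ⟨(π i : ℕ), hi⟩ : Fin n) = π i := by
          apply Fin.ext; simp
        rw [this]; simp
      · rintro ⟨j, rfl⟩
        simp [Fin.castLE]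
    rw [himg, Finset.card_image_of_injective _
      (fun x y hxy => (Fin.castLE_injective hn) (π.symm.injective hxy))]
    simp
  set e := P.orderIsoOfFin hcard with he
  have hmem : ∀ a : Fin 5, (π ((e a : { x // x ∈ P }) : Fin n) : ℕ) < 5 := by
    intro a
    exact (Finset.mem_filter.mp (e a).2).2
  set f : Fin 5 → Fin 5 := fun a => ⟨(π ((e a : { x // x ∈ P }) : Fin n) : ℕ), hmem a⟩ with hf
  have hinj : Function.Injective f := by
    intro a b hab
    have h1 : (π ((e a : { x // x ∈ P }) : Fin n)) = (π ((e b : { x // x ∈ P }) : Fin n)) :=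
      by
      have h0 := congrArg Fin.val hab
      exact Fin.val_injective h0
    have h2 : ((e a : { x // x ∈ P }) : Fin n) = ((e b : { x // x ∈ P }) : Fin n) :=
      π.injective h1
    exact e.injective (Subtype.ext h2)
  set σ : Equiv.Perm (Fin 5) := Equiv.ofBijective f (Finite.injective_iff_bijective.mp hinj)
    with hσ
  have hσval : ∀ a : Fin 5, (σ a : ℕ) = (π ((e a : { x // x ∈ P }) : Fin n) : ℕ) := by
    intro a; rfl
  have hemono : ∀ a b : Fin 5, a < b ↔
      ((e a : { x // x ∈ P }) : Fin n) < ((e b : { x // x ∈ P }) : Fin n) := by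
    intro a b
    exact (e.lt_iff_lt.symm).trans Subtype.coe_lt_coe.symm
  -- transfer Bdd
  have hbdd : Bdd σ := by
    intro k hk
    rintro ⟨a, b, c, hab, hbc, ha, hb, hc, g1, g2, d1, d2⟩
    have hk5 : k ≤ 5 := by simp [Finset.mem_range] at hk; omega
    apply hs k
    refine ⟨(e a : { x // x ∈ P }), (e b : { x // x ∈ P }), (e c : { x // x ∈ P }),
      (hemono a b).mp hab, (hemono b c).mp hbc, ?_, ?_, ?_, ?_, ?_, ?_, ?_⟩
    · rw [← hσval]; exact ha
    · rw [← hσval]; exact hb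
    · rw [← hσval]; exact hc
    · intro m h1 h2
      by_contra hm
      push_neg at hm
      have hm5 : (π m : ℕ) < 5 := lt_of_lt_of_le hm hk5
      have hmP : m ∈ P := by simp [hP, hm5]
      set j : Fin 5 := e.symm ⟨m, hmP⟩ with hj
      have hej : ((e j : { x // x ∈ P }) : Fin n) = m := by
        rw [hj]; simp
      have hja : a < j := by rw [hemono a j, hej]; exact h1
      have hjb : j < b := by rw [hemono j b, hej]; exact h2
      have := g1 j hja hjb
      rw [hσval, hej] at this
      omega
    · intro m h1 h2
      by_contra hm
      push_neg at hm
      have hm5 : (π m : ℕ) < 5 := lt_of_lt_of_le hm hk5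
      have hmP : m ∈ P := by simp [hP, hm5]
      set j : Fin 5 := e.symm ⟨m, hmP⟩ with hj
      have hej : ((e j : { x // x ∈ P }) : Fin n) = m := by
        rw [hj]; simp
      have hja : b < j := by rw [hemono b j, hej]; exact h1
      have hjb : j < c := by rw [hemono j c, hej]; exact h2
      have := g2 j hja hjb
      rw [hσval, hej] at this
      omega
    · rw [← hσval, ← hσval]; exact d1
    · rw [← hσval, ← hσval]; exact d2
  have lt_of : ∀ a b : Fin 5, σ a < σ b →
      π ((e a : { x // x ∈ P }) : Fin n) < π ((e b : { x // x ∈ P }) : Fin n) := by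
    intro a b h
    rw [Fin.lt_def] at h ⊢
    rw [← hσval, ← hσval]; exact h
  have h123 : Contains123 σ → Contains123 π := by
    rintro ⟨a, b, c, hab, hbc, h1, h2⟩
    exact ⟨_, _, _, (hemono a b).mp hab, (hemono b c).mp hbc, lt_of a b h1, lt_of b c h2⟩
  have h231 : Contains231 σ → Contains231 π := by
    rintro ⟨a, b, c, hab, hbc, h1, h2⟩
    exact ⟨_, _, _, (hemono a b).mp hab, (hemono b c).mp hbc, lt_of c a h1, lt_of a b h2⟩
  have h312 : Contains312 σ → Contains312 π := by
    rintro ⟨a, b, c, hab, hbc, h1, h2⟩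
    exact ⟨_, _, _, (hemono a b).mp hab, (hemono b c).mp hbc, lt_of b c h1, lt_of c a h2⟩
  obtain ⟨hA, hB⟩ := key5 σ hbdd
  exact ⟨hA.imp h123 h231, hB.imp h123 h312⟩


/-- For `n ≥ 5`, there is no simsun permutation of `{1, …, n}` avoiding both
123 and 231, and none avoiding both 123 and 312. -/
theorem simsun_avoid123_231_and_123_312_empty (n : ℕ) (hn : 5 ≤ n) :
    (∀ π : Equiv.Perm (Fin n),
        ¬ (IsSimsun π ∧ ¬ Contains123 π ∧ ¬ Contains231 π)) ∧
      (∀ π : Equiv.Perm (Fin n),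
        ¬ (IsSimsun π ∧ ¬ Contains123 π ∧ ¬ Contains312 π)) := by
  constructor
  · rintro π ⟨hs, h1, h2⟩
    rcases (main n hn π hs).1 with h | h
    exacts [h1 h, h2 h]
  · rintro π ⟨hs, h1, h2⟩
    rcases (main n hn π hs).2 with h | h
    exacts [h1 h, h2 h]
end

section
/- For every n ≥ 1, the number of simsun permutations of {1,…,n} that avoid both patterns 132 and 231 equals n. Moreover, a permutation π of {1,…,n} is simsun and avoids both 132 and 231 if and only if π_2 < π_3 < ⋯ < π_n. -/
/-- Increasing from the second position on. -/
def Inc {n : ℕ} (π : Equiv.Perm (Fin n)) : Prop :=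
  ∀ (i : ℕ) (h : i + 1 < n), 1 ≤ i → π ⟨i, Nat.lt_of_succ_lt h⟩ < π ⟨i + 1, h⟩

lemma inc_mono {n : ℕ} {π : Equiv.Perm (Fin n)} (hπ : Inc π) :
    ∀ (j : ℕ) (hj : j < n) (i : ℕ) (hi : i < n), 1 ≤ i → i < j →
      π ⟨i, hi⟩ < π ⟨j, hj⟩ := by
  intro j
  induction j with
  | zero => omega
  | succ m ih =>
    intro hj i hi h1 hij
    rcases Nat.lt_or_ge i m with h | h
    · exact lt_trans (ih (by omega) i hi h1 h) (hπ m hj (by omega))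
    · have : i = m := by omega
      subst this
      exact hπ i hj h1

lemma inc_props {n : ℕ} {π : Equiv.Perm (Fin n)} (hπ : Inc π) :
    IsSimsun π ∧ ¬ Contains132 π ∧ ¬ Contains231 π := by
  have key : ∀ a b c : Fin n, a < b → b < c → π b < π c := by
    intro a b c hab hbc
    have hab' : (a : ℕ) < b := hab
    have hbc' : (b : ℕ) < c := hbc
    have := inc_mono hπ (c : ℕ) c.isLt (b : ℕ) b.isLt (by omega) hbc'
    simpa using this
  refine ⟨?_, ?_, ?_⟩
  · intro k ⟨a, b, c, hab, hbc, _, _, _, _, _, hcb, _⟩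
    have h : (π b : ℕ) < π c := key a b c hab hbc
    omega
  · intro ⟨a, b, c, hab, hbc, _, hcb⟩
    exact absurd (key a b c hab hbc) (not_lt.2 hcb.le)
  · intro ⟨a, b, c, hab, hbc, hca, hab'⟩
    exact absurd (key a b c hab hbc) (not_lt.2 (hca.trans hab').le)

lemma props_inc {n : ℕ} {π : Equiv.Perm (Fin n)}
    (hs : IsSimsun π) (h132 : ¬ Contains132 π) (h231 : ¬ Contains231 π) : Inc π := by
  intro i h h1
  by_contra hlt
  have hi1 : i - 1 < n := by omega
  have hi : i < n := by omega
  have hAB : (⟨i - 1, hi1⟩ : Fin n) < ⟨i, hi⟩ := Fin.mk_lt_mk.mpr (by omega)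
  have hBC : (⟨i, hi⟩ : Fin n) < ⟨i + 1, h⟩ := Fin.mk_lt_mk.mpr (by omega)
  have hne : π ⟨i, hi⟩ ≠ π ⟨i + 1, h⟩ := by
    intro e
    have := π.injective e
    simp only [Fin.mk.injEq] at this
    omega
  have hle : π ⟨i + 1, h⟩ ≤ π ⟨i, hi⟩ := le_of_not_gt hlt
  have hCB : π ⟨i + 1, h⟩ < π ⟨i, hi⟩ := lt_of_le_of_ne hle fun e => hne e.symm
  rcases lt_trichotomy (π ⟨i - 1, hi1⟩) (π ⟨i, hi⟩) with hABv | hABv | hABv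
  · rcases lt_trichotomy (π ⟨i - 1, hi1⟩) (π ⟨i + 1, h⟩) with hAC | hAC | hAC
    · exact h132 ⟨_, _, _, hAB, hBC, hAC, hCB⟩
    · have := π.injective hAC
      simp only [Fin.mk.injEq] at this
      omega
    · exact h231 ⟨_, _, _, hAB, hBC, hAC, hABv⟩
  · have := π.injective hABv
    simp only [Fin.mk.injEq] at this
    omega
  · refine hs n ⟨_, _, _, hAB, hBC, (π _).isLt, (π _).isLt, (π _).isLt, ?_, ?_, hCB, hABv⟩
    · intro m hm1 hm2
      exfalso
      have h1' : i - 1 < (m : ℕ) := hm1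
      have h2' : (m : ℕ) < i := hm2
      omega
    · intro m hm1 hm2
      exfalso
      have h1' : i < (m : ℕ) := hm1
      have h2' : (m : ℕ) < i + 1 := hm2
      omega

lemma inc_unique {n : ℕ} (hn : 0 < n) {π σ : Equiv.Perm (Fin n)} (hπ : Inc π) (hσ : Inc σ)
    (h0 : π ⟨0, hn⟩ = σ ⟨0, hn⟩) : π = σ := by
  have hnl : ∀ (τ ρ : Equiv.Perm (Fin n)), Inc τ → Inc ρ →
      ∀ (i : ℕ) (hi : i < n), 0 < i →
      (∀ (j : ℕ) (hj : j < n), j < i → τ ⟨j, hj⟩ = ρ ⟨j, hj⟩) →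
      ¬ (τ ⟨i, hi⟩ < ρ ⟨i, hi⟩) := by
    intro τ ρ hτ hρ i hi hpos IH hlt
    set j : Fin n := ρ.symm (τ ⟨i, hi⟩) with hjdef
    have hρj : ρ j = τ ⟨i, hi⟩ := ρ.apply_symm_apply _
    rcases lt_trichotomy (j : ℕ) i with hji | hji | hji
    · have e1 : τ j = ρ j := IH (j : ℕ) j.isLt hji
      have e2 : τ j = τ ⟨i, hi⟩ := e1.trans hρj
      have e3 := τ.injective e2
      have e4 : (j : ℕ) = i := congrArg Fin.val e3
      omega
    · have hje : j = ⟨i, hi⟩ := Fin.ext hji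
      rw [hje] at hρj
      rw [hρj] at hlt
      exact lt_irrefl _ hlt
    · have hmono : ρ ⟨i, hi⟩ < ρ j := inc_mono hρ (j : ℕ) j.isLt i hi hpos hji
      rw [hρj] at hmono
      exact lt_asymm hlt hmono
  have key : ∀ (i : ℕ) (hi : i < n), π ⟨i, hi⟩ = σ ⟨i, hi⟩ := by
    intro i
    induction i using Nat.strong_induction_on with
    | _ i IHm =>
      intro hi
      rcases Nat.eq_zero_or_pos i with rfl | hpos
      · exact h0
      · have h1 := hnl π σ hπ hσ i hi hpos (fun j hj hji => IHm j hji hj)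
        have h2 := hnl σ π hσ hπ i hi hpos (fun j hj hji => (IHm j hji hj).symm)
        exact le_antisymm (le_of_not_gt h2) (le_of_not_gt h1)
  exact Equiv.ext fun x => key x.1 x.2

/-- The unique `Inc` permutation with first value `v`. -/
def mkPerm {n : ℕ} (hn : 0 < n) (v : Fin n) : Equiv.Perm (Fin n) where
  toFun i := if (i : ℕ) = 0 then v
    else if (i : ℕ) ≤ (v : ℕ) then ⟨(i : ℕ) - 1, by omega⟩ else i
  invFun j := if (j : ℕ) = (v : ℕ) then ⟨0, hn⟩
    else if h : (j : ℕ) < (v : ℕ) then ⟨(j : ℕ) + 1, by have := v.isLt; omega⟩ else j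
  left_inv := by
    intro i
    apply Fin.ext
    simp only [apply_ite (Fin.val)]
    split_ifs <;> (try simp_all) <;> omega
  right_inv := by
    intro j
    apply Fin.ext
    simp only [apply_ite (Fin.val)]
    split_ifs <;> (try simp_all) <;> omega

lemma mkPerm_inc {n : ℕ} (hn : 0 < n) (v : Fin n) : Inc (mkPerm hn v) := by
  intro i h h1
  show ((mkPerm hn v).toFun ⟨i, by omega⟩ : Fin n) < (mkPerm hn v).toFun ⟨i + 1, h⟩
  simp only [mkPerm]
  split_ifs <;> simp_all [Fin.lt_def] <;> omega

lemma mkPerm_zero {n : ℕ} (hn : 0 < n) (v : Fin n) : mkPerm hn v ⟨0, hn⟩ = v := by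
  show ((mkPerm hn v).toFun ⟨0, hn⟩ : Fin n) = v
  simp [mkPerm]

/-- For `n ≥ 1`, there are exactly `n` simsun permutations of `{1, …, n}`
avoiding both 132 and 231; moreover such permutations are exactly those with
`π 2 < π 3 < ⋯ < π n` (0-based: increasing from the second position on). -/
theorem simsun_avoid132_231_count (n : ℕ) (hn : 1 ≤ n) :
    Nat.card {π : Equiv.Perm (Fin n) //
        IsSimsun π ∧ ¬ Contains132 π ∧ ¬ Contains231 π} = n ∧
      ∀ π : Equiv.Perm (Fin n),
        ((IsSimsun π ∧ ¬ Contains132 π ∧ ¬ Contains231 π) ↔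
          ∀ (i : ℕ) (h : i + 1 < n), 1 ≤ i →
            π ⟨i, by omega⟩ < π ⟨i + 1, h⟩) := by
  have hiff : ∀ π : Equiv.Perm (Fin n),
      (IsSimsun π ∧ ¬ Contains132 π ∧ ¬ Contains231 π) ↔ Inc π :=
    fun π => ⟨fun ⟨h1, h2, h3⟩ => props_inc h1 h2 h3, inc_props⟩
  constructor
  · have hb : Function.Bijective
        (fun π : {π : Equiv.Perm (Fin n) //
            IsSimsun π ∧ ¬ Contains132 π ∧ ¬ Contains231 π} => π.1 ⟨0, hn⟩) := by
      constructor
      · rintro ⟨π, hπ⟩ ⟨σ, hσ⟩ hps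
        exact Subtype.ext (inc_unique hn ((hiff π).1 hπ) ((hiff σ).1 hσ) hps)
      · intro v
        exact ⟨⟨mkPerm hn v, (hiff _).2 (mkPerm_inc hn v)⟩, mkPerm_zero hn v⟩
    rw [Nat.card_eq_of_bijective _ hb, Nat.card_eq_fintype_card, Fintype.card_fin]
  · intro π
    exact hiff π
end

section
/- For every n ≥ 0, the number of simsun permutations of {1,…,n} that avoid both patterns 213 and 231 equals the Fibonacci number F_{n+1} (with F_1 = F_2 = 1). -/
def SExt {n : ℕ} (π : Equiv.Perm (Fin n)) : Prop :=
  ∀ a b c : Fin n, a < b → a < c → π b < π a → π c < π a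

def SNoDD {n : ℕ} (π : Equiv.Perm (Fin n)) : Prop :=
  ∀ a b c : Fin n, (a : ℕ) + 1 = (b : ℕ) → (b : ℕ) + 1 = (c : ℕ) →
    π c < π b → ¬ π b < π a

lemma good_iff {n : ℕ} (π : Equiv.Perm (Fin n)) :
    (IsSimsun π ∧ ¬ Contains213 π ∧ ¬ Contains231 π) ↔ (SExt π ∧ SNoDD π) := by
  constructor
  · rintro ⟨hs, h213, h231⟩
    constructor
    · intro a b c hab hac hba
      by_contra hc
      have hne : π c ≠ π a := fun h => (Fin.ne_of_gt hac) (π.injective h)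
      have hac' : π a < π c := lt_of_le_of_ne (not_lt.mp hc) (Ne.symm hne)
      rcases lt_trichotomy b c with h | h | h
      · exact h213 ⟨a, b, c, hab, h, hba, hac'⟩
      · exact absurd hac' (by rw [h] at hba; exact not_lt.mpr hba.le)
      · exact h231 ⟨a, c, b, hac, h, hba, hac'⟩
    · intro a b c hab hbc hcb hba
      refine hs ((π a : ℕ) + 1) ⟨a, b, c, ?_, ?_, ?_, ?_, ?_, ?_, ?_, ?_, ?_⟩
      · exact Fin.lt_def.mpr (by omega)
      · exact Fin.lt_def.mpr (by omega)
      · omega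
      · have := Fin.lt_def.mp hba; omega
      · have h1 := Fin.lt_def.mp hba; have h2 := Fin.lt_def.mp hcb; omega
      · intro m hm1 hm2
        have := Fin.lt_def.mp hm1; have := Fin.lt_def.mp hm2; omega
      · intro m hm1 hm2
        have := Fin.lt_def.mp hm1; have := Fin.lt_def.mp hm2; omega
      · exact Fin.lt_def.mp hcb
      · exact Fin.lt_def.mp hba
  · rintro ⟨hSExt, hSNoDD⟩
    refine ⟨?_, ?_, ?_⟩
    · intro k ⟨a, b, c, hab, hbc, hak, hbk, hck, hgap1, hgap2, hcb, hba⟩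
      have hba' : π b < π a := Fin.lt_def.mpr hba
      have hcb' : π c < π b := Fin.lt_def.mpr hcb
      have hb : (a : ℕ) + 1 = (b : ℕ) := by
        by_contra h
        have hab' := Fin.lt_def.mp hab
        have hm : (a : ℕ) + 1 < n := by have := b.isLt; omega
        set m : Fin n := ⟨(a : ℕ) + 1, hm⟩ with hmdef
        have h1 : a < m := Fin.lt_def.mpr (by simp [hmdef])
        have h2 : m < b := Fin.lt_def.mpr (by simp [hmdef]; omega)
        have := hgap1 m h1 h2
        have := Fin.lt_def.mp (hSExt a b m hab h1 hba')
        omega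
      have hc : (b : ℕ) + 1 = (c : ℕ) := by
        by_contra h
        have hbc' := Fin.lt_def.mp hbc
        have hm : (b : ℕ) + 1 < n := by have := c.isLt; omega
        set m : Fin n := ⟨(b : ℕ) + 1, hm⟩ with hmdef
        have h1 : b < m := Fin.lt_def.mpr (by simp [hmdef])
        have h2 : m < c := Fin.lt_def.mpr (by simp [hmdef]; omega)
        have := hgap2 m h1 h2
        have := Fin.lt_def.mp (hSExt b c m hbc h1 hcb')
        omega
      exact hSNoDD a b c hb hc hcb' hba'
    · rintro ⟨a, b, c, hab, hbc, hba, hac⟩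
      exact absurd (hSExt a b c hab (hab.trans hbc) hba) (not_lt.mpr hac.le)
    · rintro ⟨a, b, c, hab, hbc, hca, hab'⟩
      exact absurd (hSExt a c b (hab.trans hbc) hab hca) (not_lt.mpr hab'.le)

def consA {n : ℕ} (σ : Equiv.Perm (Fin (n + 1))) : Equiv.Perm (Fin (n + 2)) where
  toFun := Fin.cons 0 (fun i => (σ i).succ)
  invFun := Fin.cons 0 (fun i => (σ.symm i).succ)
  left_inv := by
    intro i
    cases i using Fin.cases with
    | zero => simp
    | succ i => simp
  right_inv := by
    intro i
    cases i using Fin.cases with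
    | zero => simp
    | succ i => simp

@[simp] lemma consA_zero {n : ℕ} (σ : Equiv.Perm (Fin (n + 1))) : consA σ 0 = 0 := rfl

@[simp] lemma consA_succ {n : ℕ} (σ : Equiv.Perm (Fin (n + 1))) (i : Fin (n + 1)) :
    consA σ i.succ = (σ i).succ := by
  show (Fin.cons 0 (fun i => (σ i).succ) : Fin (n+2) → Fin (n+2)) i.succ = _
  simp

def consB {n : ℕ} (σ : Equiv.Perm (Fin n)) : Equiv.Perm (Fin (n + 2)) where
  toFun := Fin.cons (Fin.last (n + 1)) (Fin.cons 0 (fun i => (σ i).succ.castSucc))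
  invFun := Fin.cons 1 (fun j => Fin.lastCases 0 (fun j' => (σ.symm j').succ.succ) j)
  left_inv := by
    intro i
    cases i using Fin.cases with
    | zero =>
        simp [← Fin.succ_last]
    | succ i =>
        cases i using Fin.cases with
        | zero => simp
        | succ i => simp [← Fin.succ_castSucc]
  right_inv := by
    intro j
    cases j using Fin.cases with
    | zero => simp
    | succ j =>
        cases j using Fin.lastCases with
        | last => simp [← Fin.succ_last]
        | cast j => simp [← Fin.succ_castSucc]

@[simp] lemma consB_zero {n : ℕ} (σ : Equiv.Perm (Fin n)) :
    consB σ 0 = Fin.last (n + 1) := rfl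

@[simp] lemma consB_one {n : ℕ} (σ : Equiv.Perm (Fin n)) : consB σ 1 = 0 := by
  show (Fin.cons (Fin.last (n + 1)) (Fin.cons 0 (fun i => (σ i).succ.castSucc)) :
    Fin (n+2) → Fin (n+2)) (Fin.succ 0) = 0
  simp

@[simp] lemma consB_succ_succ {n : ℕ} (σ : Equiv.Perm (Fin n)) (i : Fin n) :
    consB σ i.succ.succ = (σ i).succ.castSucc := by
  show (Fin.cons (Fin.last (n + 1)) (Fin.cons 0 (fun i => (σ i).succ.castSucc)) :
    Fin (n+2) → Fin (n+2)) i.succ.succ = _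
  simp

lemma sext_consA {n : ℕ} {σ : Equiv.Perm (Fin (n + 1))} (h : SExt σ) :
    SExt (consA σ) := by
  intro a b c hab hac hba
  cases a using Fin.cases with
  | zero => simp at hba
  | succ a =>
      cases b using Fin.cases with
      | zero => exact absurd hab (Fin.not_lt_zero _).elim
      | succ b =>
          cases c using Fin.cases with
          | zero => exact absurd hac (Fin.not_lt_zero _).elim
          | succ c =>
              simp only [consA_succ, Fin.succ_lt_succ_iff] at hba ⊢
              exact h a b c (Fin.succ_lt_succ_iff.mp hab) (Fin.succ_lt_succ_iff.mp hac) hba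

lemma sext_of_consA {n : ℕ} {σ : Equiv.Perm (Fin (n + 1))} (h : SExt (consA σ)) :
    SExt σ := by
  intro a b c hab hac hba
  have := h a.succ b.succ c.succ (Fin.succ_lt_succ_iff.mpr hab)
    (Fin.succ_lt_succ_iff.mpr hac)
    (by simpa [Fin.succ_lt_succ_iff] using hba)
  simpa [Fin.succ_lt_succ_iff] using this

lemma snodd_consA {n : ℕ} {σ : Equiv.Perm (Fin (n + 1))} (h : SNoDD σ) :
    SNoDD (consA σ) := by
  intro a b c h1 h2 hcb hba
  cases a using Fin.cases with
  | zero => simp at hba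
  | succ a =>
      cases b using Fin.cases with
      | zero => simp at h1
      | succ b =>
          cases c using Fin.cases with
          | zero => simp at h2
          | succ c =>
              simp only [Fin.val_succ] at h1 h2
              simp only [consA_succ, Fin.succ_lt_succ_iff] at hcb hba
              exact h a b c (by omega) (by omega) hcb hba

lemma snodd_of_consA {n : ℕ} {σ : Equiv.Perm (Fin (n + 1))} (h : SNoDD (consA σ)) :
    SNoDD σ := by
  intro a b c h1 h2 hcb hba
  exact h a.succ b.succ c.succ (by simp; omega) (by simp; omega)
    (by simpa [Fin.succ_lt_succ_iff] using hcb)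
    (by simpa [Fin.succ_lt_succ_iff] using hba)

lemma sext_consB {n : ℕ} {σ : Equiv.Perm (Fin n)} (h : SExt σ) :
    SExt (consB σ) := by
  intro a b c hab hac hba
  cases a using Fin.cases with
  | zero =>
      -- value is last; everything with index ≠ 0 is smaller
      cases c using Fin.cases with
      | zero => exact absurd hac (lt_irrefl _).elim
      | succ c =>
          cases c using Fin.cases with
          | zero =>
              simp only [Fin.succ_zero_eq_one, consB_one, consB_zero]
              simp [Fin.lt_def]
          | succ c =>
              simp only [consB_succ_succ, consB_zero]
              exact Fin.castSucc_lt_last _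
  | succ a =>
      cases a using Fin.cases with
      | zero =>
          -- a = 1, value 0
          simp only [Fin.succ_zero_eq_one, consB_one] at hba
          exact absurd hba (Fin.not_lt_zero _)
      | succ a =>
          cases b using Fin.cases with
          | zero => exact absurd hab (Fin.not_lt_zero _).elim
          | succ b =>
              cases b using Fin.cases with
              | zero =>
                  exfalso
                  have := Fin.lt_def.mp hab
                  simp at this
              | succ b =>
                  cases c using Fin.cases with
                  | zero => exact absurd hac (Fin.not_lt_zero _).elim
                  | succ c =>
                      cases c using Fin.cases with
                      | zero =>
                          exfalso
                          have := Fin.lt_def.mp hac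
                          simp at this
                      | succ c =>
                          simp only [consB_succ_succ, Fin.castSucc_lt_castSucc_iff,
                            Fin.succ_lt_succ_iff] at hba ⊢
                          have hab' : a < b := by
                            have := Fin.lt_def.mp hab; simp at this
                            exact Fin.lt_def.mpr (by omega)
                          have hac' : a < c := by
                            have := Fin.lt_def.mp hac; simp at this
                            exact Fin.lt_def.mpr (by omega)
                          exact h a b c hab' hac' hba

lemma sext_of_consB {n : ℕ} {σ : Equiv.Perm (Fin n)} (h : SExt (consB σ)) :
    SExt σ := by
  intro a b c hab hac hba
  have := h a.succ.succ b.succ.succ c.succ.succ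
    (by simpa [Fin.succ_lt_succ_iff] using hab)
    (by simpa [Fin.succ_lt_succ_iff] using hac)
    (by simpa [Fin.castSucc_lt_castSucc_iff, Fin.succ_lt_succ_iff] using hba)
  simpa [Fin.castSucc_lt_castSucc_iff, Fin.succ_lt_succ_iff] using this

lemma snodd_consB {n : ℕ} {σ : Equiv.Perm (Fin n)} (h : SNoDD σ) :
    SNoDD (consB σ) := by
  intro a b c h1 h2 hcb hba
  cases a using Fin.cases with
  | zero =>
      cases b using Fin.cases with
      | zero => simp at h1
      | succ b =>
          cases b using Fin.cases with
          | zero =>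
              simp only [Fin.succ_zero_eq_one, consB_one] at hcb
              exact absurd hcb (Fin.not_lt_zero _)
          | succ b => simp at h1
  | succ a =>
      cases a using Fin.cases with
      | zero =>
          simp only [Fin.succ_zero_eq_one, consB_one] at hba
          exact absurd hba (Fin.not_lt_zero _)
      | succ a =>
          cases b using Fin.cases with
          | zero => simp at h1
          | succ b =>
              cases b using Fin.cases with
              | zero => simp at h1
              | succ b =>
                  cases c using Fin.cases with
                  | zero => simp at h2
                  | succ c =>
                      cases c using Fin.cases with
                      | zero => simp at h2
                      | succ c =>
                          simp only [Fin.val_succ] at h1 h2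
                          simp only [consB_succ_succ, Fin.castSucc_lt_castSucc_iff,
                            Fin.succ_lt_succ_iff] at hcb hba
                          exact h a b c (by omega) (by omega) hcb hba

lemma snodd_of_consB {n : ℕ} {σ : Equiv.Perm (Fin n)} (h : SNoDD (consB σ)) :
    SNoDD σ := by
  intro a b c h1 h2 hcb hba
  exact h a.succ.succ b.succ.succ c.succ.succ (by simp; omega) (by simp; omega)
    (by simpa [Fin.castSucc_lt_castSucc_iff, Fin.succ_lt_succ_iff] using hcb)
    (by simpa [Fin.castSucc_lt_castSucc_iff, Fin.succ_lt_succ_iff] using hba)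

lemma pi_zero_cases {n : ℕ} {π : Equiv.Perm (Fin (n + 2))} (hext : SExt π) :
    π 0 = 0 ∨ π 0 = Fin.last (n + 1) := by
  by_cases h : ∃ b : Fin (n + 2), 0 < b ∧ π b < π 0
  · right
    obtain ⟨b, hb, hbv⟩ := h
    set x := π.symm (Fin.last (n + 1)) with hx
    rcases eq_or_ne x 0 with h0 | h0
    · have hs : π.symm (Fin.last (n + 1)) = 0 := by rw [← hx]; exact h0
      exact ((Equiv.symm_apply_eq π).mp hs).symm
    · have hx0 : (0 : Fin (n + 2)) < x := Fin.pos_of_ne_zero h0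
      have := hext 0 b x hb hx0 hbv
      rw [hx, Equiv.apply_symm_apply] at this
      exact absurd this (not_lt.mpr (Fin.le_last _))
  · left
    push_neg at h
    set x := π.symm 0 with hx
    rcases eq_or_ne x 0 with h0 | h0
    · have hs : π.symm 0 = 0 := by rw [← hx]; exact h0
      exact ((Equiv.symm_apply_eq π).mp hs).symm
    · have hx0 : (0 : Fin (n + 2)) < x := Fin.pos_of_ne_zero h0
      have h1 := h x hx0
      rw [hx, Equiv.apply_symm_apply] at h1
      exact le_antisymm h1 (Fin.zero_le _)

lemma pi_one_eq_zero {n : ℕ} {π : Equiv.Perm (Fin (n + 2))} (hext : SExt π)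
    (hdd : SNoDD π) (h0 : π 0 = Fin.last (n + 1)) : π 1 = 0 := by
  have h10 : (1 : Fin (n + 2)) ≠ 0 := by
    simp [Fin.ext_iff]
  by_cases h : ∃ b : Fin (n + 2), 1 < b ∧ π b < π 1
  · exfalso
    obtain ⟨b, hb, hbv⟩ := h
    have hn2 : 2 < n + 2 := by
      have h1 : (1 : ℕ) < (b : ℕ) := by simpa using Fin.lt_def.mp hb
      have := b.isLt
      omega
    set t : Fin (n + 2) := ⟨2, hn2⟩ with ht
    have htv : π t < π 1 := by
      rcases eq_or_ne t b with rfl | hne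
      · exact hbv
      · exact hext 1 b t hb (Fin.lt_def.mpr (by simp [ht])) hbv
    have h1lt : π 1 < π 0 := by
      rw [h0]
      refine lt_of_le_of_ne (Fin.le_last _) ?_
      intro hh
      exact h10 (π.injective (hh.trans h0.symm))
    exact hdd 0 1 t (by simp) (by simp [ht]) htv h1lt
  · push_neg at h
    have hπx : π (π.symm 0) = 0 := Equiv.apply_symm_apply _ _
    set x := π.symm 0 with hx
    have hx0 : x ≠ 0 := by
      intro hh
      rw [hh] at hπx
      rw [hπx] at h0
      exact absurd h0.symm (Fin.ext_iff.not.mpr (by simp))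
    rcases eq_or_ne x 1 with h1 | h1
    · rw [← h1, hπx]
    · have hlt : (1 : Fin (n + 2)) < x := by
        rw [Fin.lt_def]
        have hv0 : (x : ℕ) ≠ 0 := fun hh => hx0 (Fin.ext (by simpa using hh))
        have hv1 : (x : ℕ) ≠ 1 := fun hh => h1 (Fin.ext (by simpa using hh))
        simp only [Fin.val_one]
        omega
      have := h x hlt
      rw [hπx] at this
      exact Fin.le_zero_iff.mp this

lemma exists_consA {n : ℕ} {π : Equiv.Perm (Fin (n + 2))} (h0 : π 0 = 0) :
    ∃ σ : Equiv.Perm (Fin (n + 1)), consA σ = π := by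
  have hne : ∀ i : Fin (n + 1), π i.succ ≠ 0 := by
    intro i hh
    exact Fin.succ_ne_zero i (π.injective (hh.trans h0.symm))
  set f : Fin (n + 1) → Fin (n + 1) := fun i => (π i.succ).pred (hne i) with hf
  have hinj : Function.Injective f := by
    intro i j hij
    have : (π i.succ) = (π j.succ) := by
      rw [← Fin.succ_pred (π i.succ) (hne i), ← Fin.succ_pred (π j.succ) (hne j)]
      exact congrArg Fin.succ hij
    exact Fin.succ_injective _ (π.injective this)
  refine ⟨Equiv.ofBijective f (Finite.injective_iff_bijective.mp hinj), ?_⟩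
  apply Equiv.ext
  intro i
  cases i using Fin.cases with
  | zero => rw [consA_zero, h0]
  | succ i =>
      rw [consA_succ]
      show (f i).succ = π i.succ
      rw [hf]
      exact Fin.succ_pred _ _

lemma exists_consB {n : ℕ} {π : Equiv.Perm (Fin (n + 2))}
    (h0 : π 0 = Fin.last (n + 1)) (h1 : π 1 = 0) :
    ∃ σ : Equiv.Perm (Fin n), consB σ = π := by
  have hv1 : ∀ i : Fin n, 1 ≤ (π i.succ.succ : ℕ) := by
    intro i
    by_contra hh
    have hz : π i.succ.succ = 0 := by
      apply Fin.ext
      rw [Fin.val_zero]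
      omega
    have h2 : i.succ.succ = 1 := π.injective (hz.trans h1.symm)
    have h3 := congrArg Fin.val h2
    simp only [Fin.val_succ, Fin.val_one] at h3
    omega
  have hv2 : ∀ i : Fin n, (π i.succ.succ : ℕ) ≤ n := by
    intro i
    have hlt := (π i.succ.succ).isLt
    by_contra hh
    have hz : π i.succ.succ = Fin.last (n + 1) := by
      apply Fin.ext
      rw [Fin.val_last]
      omega
    have : i.succ.succ = 0 := π.injective (hz.trans h0.symm)
    exact Fin.succ_ne_zero _ this
  set f : Fin n → Fin n := fun i => ⟨(π i.succ.succ : ℕ) - 1, by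
    have := hv1 i; have := hv2 i; omega⟩ with hf
  have hinj : Function.Injective f := by
    intro i j hij
    have hval : (π i.succ.succ : ℕ) = (π j.succ.succ : ℕ) := by
      have := congrArg Fin.val hij
      simp only [hf] at this
      have := hv1 i; have := hv1 j
      omega
    have := π.injective (Fin.ext hval)
    exact Fin.succ_injective _ (Fin.succ_injective _ this)
  refine ⟨Equiv.ofBijective f (Finite.injective_iff_bijective.mp hinj), ?_⟩
  apply Equiv.ext
  intro i
  cases i using Fin.cases with
  | zero => rw [consB_zero, h0]
  | succ i =>
      cases i using Fin.cases with
      | zero => rw [Fin.succ_zero_eq_one, consB_one, h1]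
      | succ i =>
          rw [consB_succ_succ]
          show ((f i).succ.castSucc) = π i.succ.succ
          apply Fin.ext
          simp only [Fin.coe_castSucc, Fin.val_succ, hf]
          have := hv1 i
          omega

lemma card_step (n : ℕ) :
    Nat.card {π : Equiv.Perm (Fin (n + 2)) // SExt π ∧ SNoDD π} =
      Nat.card {σ : Equiv.Perm (Fin (n + 1)) // SExt σ ∧ SNoDD σ} +
      Nat.card {σ : Equiv.Perm (Fin n) // SExt σ ∧ SNoDD σ} := by
  rw [← Nat.card_sum]
  refine (Nat.card_eq_of_bijective ?_ ?_).symm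
  · exact Sum.elim
      (fun σ => ⟨consA σ.1, sext_consA σ.2.1, snodd_consA σ.2.2⟩)
      (fun σ => ⟨consB σ.1, sext_consB σ.2.1, snodd_consB σ.2.2⟩)
  constructor
  · rintro (⟨σ, hσ⟩ | ⟨σ, hσ⟩) (⟨τ, hτ⟩ | ⟨τ, hτ⟩) h <;>
      simp only [Sum.elim_inl, Sum.elim_inr, Subtype.mk.injEq] at h
    · have hστ : σ = τ := by
        apply Equiv.ext
        intro i
        have := DFunLike.congr_fun h i.succ
        simp only [consA_succ] at this
        exact Fin.succ_injective _ this
      simp [hστ]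
    · exfalso
      have := DFunLike.congr_fun h 0
      simp only [consA_zero, consB_zero] at this
      have := congrArg Fin.val this
      simp [Fin.val_last] at this
    · exfalso
      have := DFunLike.congr_fun h 0
      simp only [consA_zero, consB_zero] at this
      have := congrArg Fin.val this
      simp [Fin.val_last] at this
    · have hστ : σ = τ := by
        apply Equiv.ext
        intro i
        have := DFunLike.congr_fun h i.succ.succ
        simp only [consB_succ_succ] at this
        exact Fin.succ_injective _ (Fin.castSucc_injective _ this)
      simp [hστ]
  · rintro ⟨π, hext, hdd⟩
    rcases pi_zero_cases hext with h0 | h0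
    · obtain ⟨σ, hσ⟩ := exists_consA h0
      refine ⟨Sum.inl ⟨σ, ?_, ?_⟩, ?_⟩
      · exact sext_of_consA (by rw [hσ]; exact hext)
      · exact snodd_of_consA (by rw [hσ]; exact hdd)
      · exact Subtype.ext hσ
    · obtain ⟨σ, hσ⟩ := exists_consB h0 (pi_one_eq_zero hext hdd h0)
      refine ⟨Sum.inr ⟨σ, ?_, ?_⟩, ?_⟩
      · exact sext_of_consB (by rw [hσ]; exact hext)
      · exact snodd_of_consB (by rw [hσ]; exact hdd)
      · exact Subtype.ext hσ

lemma card_good : ∀ n : ℕ,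
    Nat.card {π : Equiv.Perm (Fin n) // SExt π ∧ SNoDD π} = Nat.fib (n + 1) := by
  intro n
  induction n using Nat.strong_induction_on with
  | _ n ih =>
    match n with
    | 0 =>
        have htriv : ∀ π : Equiv.Perm (Fin 0), SExt π ∧ SNoDD π :=
          fun π => ⟨fun a => a.elim0, fun a => a.elim0⟩
        rw [Nat.card_congr (Equiv.subtypeUnivEquiv htriv)]
        simp [Nat.card_eq_fintype_card]
    | 1 =>
        have htriv : ∀ π : Equiv.Perm (Fin 1), SExt π ∧ SNoDD π := by
          intro π
          constructor
          · intro a b c hab hac hba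
            rw [Subsingleton.elim a b] at hab
            exact absurd hab (lt_irrefl _)
          · intro a b c h1 h2 hcb hba
            have := a.isLt; have := b.isLt
            omega
        rw [Nat.card_congr (Equiv.subtypeUnivEquiv htriv)]
        simp [Nat.card_eq_fintype_card]
    | (m + 2) =>
        rw [card_step, ih (m + 1) (by omega), ih m (by omega)]
        show Nat.fib (m + 1 + 1) + Nat.fib (m + 1) = Nat.fib (m + 1 + 2)
        rw [Nat.fib_add_two (n := m + 1)]
        exact Nat.add_comm _ _

/-- The number of simsun permutations of `{1, …, n}` avoiding both 213 and 231
equals the Fibonacci number `F (n+1)` (with `F 1 = F 2 = 1`). -/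
theorem simsun_avoid213_231_count (n : ℕ) :
    Nat.card {π : Equiv.Perm (Fin n) //
      IsSimsun π ∧ ¬ Contains213 π ∧ ¬ Contains231 π} = Nat.fib (n + 1) := by
  rw [Nat.card_congr (Equiv.subtypeEquivRight (fun π => good_iff π))]
  exact card_good n
end
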